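/- arXiv:1106.5395 — 5 statements merged into one kernel-verified Lean document; each statement's English description precedes it below -/
import Mathlib

section
/- Let R be an allowed regular local k-algebra over a field k of characteristic 0. Then the ring of differential operators D_{R/k} is generated as a k-algebra by its first-order part D^1_{R/k} = R + T_{R/k}. -/
open IsLocalRing

universe u v

/-- The filtration `D^m_{R/k} ⊆ End_k(R)` of differential operators: `D^0` consists of the
multiplication operators by elements of `R`, and
`D^{m+1} = {P ∈ End_k(R) : [P, a] ∈ D^m for all a ∈ R}`. -/
def diffOp (k : Type u) (R : Type v) [CommRing k] [CommRing R] [Algebra k R] :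
    ℕ → Set (Module.End k R)
  | 0 => Set.range (Algebra.lmul k R)
  | m + 1 => {P | ∀ r : R, P * Algebra.lmul k R r - Algebra.lmul k R r * P ∈ diffOp k R m}

namespace DiffOpAux
variable {k : Type u} {R : Type v} [Field k] [CommRing R] [Algebra k R]
noncomputable def lm (k : Type u) {R : Type v} [Field k] [CommRing R] [Algebra k R] (a : R) :
    Module.End k R := Algebra.lmul k R a
@[simp] lemma lm_apply (a y : R) : lm k a y = a * y := rfl
lemma lm_mul (a b : R) : lm k (a * b) = lm k a * lm k b := map_mul _ _ _
lemma lm_comm (a b : R) : lm k a * lm k b = lm k b * lm k a := by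
  rw [← lm_mul, ← lm_mul, mul_comm]
lemma lm_add (a b : R) : lm k (a + b) = lm k a + lm k b := map_add _ _ _
lemma lm_smul (c : k) (a : R) : lm k (c • a) = c • lm k a := by
  ext y; simp [smul_mul_assoc]
noncomputable def adOp (a : R) (X : Module.End k R) : Module.End k R :=
  X * lm k a - lm k a * X
lemma mem_diffOp_succ_iff {P : Module.End k R} {m : ℕ} :
    P ∈ diffOp k R (m + 1) ↔ ∀ r : R, adOp r P ∈ diffOp k R m := Iff.rfl
lemma mem_diffOp_zero_iff {P : Module.End k R} :
    P ∈ diffOp k R 0 ↔ ∃ a : R, lm k a = P := Iff.rfl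
lemma lm_mem (a : R) : lm k a ∈ diffOp k R 0 := ⟨a, rfl⟩

-- adOp algebra
lemma adOp_lm (r a : R) : adOp r (lm k a) = 0 := by
  rw [adOp, lm_comm, sub_self]
lemma adOp_add_right (r : R) (X Y : Module.End k R) :
    adOp r (X + Y) = adOp r X + adOp r Y := by
  simp only [adOp]; noncomm_ring
lemma adOp_sub_right (r : R) (X Y : Module.End k R) :
    adOp r (X - Y) = adOp r X - adOp r Y := by
  simp only [adOp, sub_mul, mul_sub]; abel
lemma adOp_zero_right (r : R) : adOp r (0 : Module.End k R) = 0 := by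
  simp [adOp]
lemma adOp_smul_right (r : R) (c : k) (X : Module.End k R) :
    adOp r (c • X) = c • adOp r X := by
  simp only [adOp, smul_mul_assoc, mul_smul_comm, smul_sub]
lemma adOp_sum_right {ι : Type*} (r : R) (s : Finset ι) (f : ι → Module.End k R) :
    adOp r (∑ i ∈ s, f i) = ∑ i ∈ s, adOp r (f i) := by
  classical
  induction s using Finset.induction_on with
  | empty => simp [adOp_zero_right]
  | @insert _ _ h ih => rw [Finset.sum_insert h, Finset.sum_insert h, adOp_add_right, ih]
lemma adOp_mul (r : R) (X Y : Module.End k R) :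
    adOp r (X * Y) = X * adOp r Y + adOp r X * Y := by
  simp only [adOp, mul_sub, sub_mul, mul_assoc]; abel
lemma adOp_comm (a b : R) (X : Module.End k R) :
    adOp a (adOp b X) = adOp b (adOp a X) := by
  simp only [adOp, mul_sub, sub_mul, mul_assoc]
  rw [lm_comm b a]
  rw [show lm k a * (X * lm k b) = (lm k a * X) * lm k b from (mul_assoc _ _ _).symm,
      show lm k b * (X * lm k a) = (lm k b * X) * lm k a from (mul_assoc _ _ _).symm,
      show lm k a * (lm k b * X) = lm k b * (lm k a * X) by
        rw [← mul_assoc, lm_comm, mul_assoc]]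
  abel
lemma adOp_mul_lm_right (r u : R) (X : Module.End k R) :
    adOp r (X * lm k u) = adOp r X * lm k u := by
  simp only [adOp, sub_mul, mul_assoc]
  rw [lm_comm u r, show lm k r * (X * lm k u) = (lm k r * X) * lm k u from (mul_assoc _ _ _).symm]
lemma adOp_lm_mul_left (r u : R) (X : Module.End k R) :
    adOp r (lm k u * X) = lm k u * adOp r X := by
  simp only [adOp, mul_sub, mul_assoc]
  rw [show lm k r * (lm k u * X) = (lm k r * lm k u) * X from (mul_assoc _ _ _).symm,
     lm_comm r u, mul_assoc]
lemma adOp_add_arg (a b : R) (X : Module.End k R) :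
    adOp (a + b) X = adOp a X + adOp b X := by
  simp only [adOp, lm_add]; noncomm_ring
lemma adOp_smul_arg (c : k) (a : R) (X : Module.End k R) :
    adOp (c • a) X = c • adOp a X := by
  simp only [adOp, lm_smul, smul_mul_assoc, mul_smul_comm, smul_sub]
lemma adOp_leibniz (a b : R) (X : Module.End k R) :
    adOp (a * b) X = adOp a X * lm k b + lm k a * adOp b X := by
  simp only [adOp, lm_mul, mul_sub, sub_mul, mul_assoc]; abel
lemma adOp_der (a : R) (δ : Derivation k R R) :
    adOp a (δ : Module.End k R) = lm k (δ a) := by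
  ext y
  simp only [adOp, LinearMap.sub_apply, Module.End.mul_apply, lm_apply, Derivation.coeFn_coe,
    Derivation.leibniz, smul_eq_mul]
  ring

-- diffOp closure properties
lemma diffOp_zero_mem : ∀ m : ℕ, (0 : Module.End k R) ∈ diffOp k R m
  | 0 => ⟨0, by ext y; simp⟩
  | m + 1 => fun r => by
      show adOp r 0 ∈ diffOp k R m
      rw [adOp_zero_right]; exact diffOp_zero_mem m

lemma diffOp_add_mem : ∀ (m : ℕ) {P Q : Module.End k R},
    P ∈ diffOp k R m → Q ∈ diffOp k R m → P + Q ∈ diffOp k R m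
  | 0, P, Q, ⟨a, ha⟩, ⟨b, hb⟩ => ⟨a + b, by rw [← ha, ← hb]; exact lm_add a b⟩
  | m + 1, P, Q, hP, hQ => fun r => by
      show adOp r (P + Q) ∈ diffOp k R m
      rw [adOp_add_right]; exact diffOp_add_mem m (hP r) (hQ r)

lemma diffOp_smul_mem : ∀ (m : ℕ) (c : k) {P : Module.End k R},
    P ∈ diffOp k R m → c • P ∈ diffOp k R m
  | 0, c, P, ⟨a, ha⟩ => ⟨c • a, by rw [← ha]; exact lm_smul c a⟩
  | m + 1, c, P, hP => fun r => by
      show adOp r (c • P) ∈ diffOp k R m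
      rw [adOp_smul_right]; exact diffOp_smul_mem m c (hP r)

lemma diffOp_neg_mem (m : ℕ) {P : Module.End k R} (hP : P ∈ diffOp k R m) :
    -P ∈ diffOp k R m := by
  have := diffOp_smul_mem m (-1 : k) hP
  convert this using 1; ext y; simp

lemma diffOp_sub_mem (m : ℕ) {P Q : Module.End k R}
    (hP : P ∈ diffOp k R m) (hQ : Q ∈ diffOp k R m) : P - Q ∈ diffOp k R m := by
  rw [sub_eq_add_neg]; exact diffOp_add_mem m hP (diffOp_neg_mem m hQ)

lemma diffOp_sum_mem {ι : Type*} (m : ℕ) (s : Finset ι) (f : ι → Module.End k R)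
    (hf : ∀ i ∈ s, f i ∈ diffOp k R m) : (∑ i ∈ s, f i) ∈ diffOp k R m := by
  classical
  induction s using Finset.induction_on with
  | empty => simpa using diffOp_zero_mem m
  | @insert j s hj ih =>
      rw [Finset.sum_insert hj]
      exact diffOp_add_mem m (hf j (s.mem_insert_self j))
        (ih fun i hi => hf i (Finset.mem_insert_of_mem hi))

lemma diffOp_mono : ∀ (m : ℕ) {P : Module.End k R},
    P ∈ diffOp k R m → P ∈ diffOp k R (m + 1)
  | 0, P, ⟨a, ha⟩ => fun r => by
      show adOp r P ∈ diffOp k R 0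
      rw [show adOp r P = 0 by
        rw [← show lm k a = P from ha]; exact adOp_lm r a]
      exact diffOp_zero_mem 0
  | m + 1, P, hP => fun r => diffOp_mono m (hP r)

lemma diffOp_le (m m' : ℕ) (h : m ≤ m') {P : Module.End k R}
    (hP : P ∈ diffOp k R m) : P ∈ diffOp k R m' := by
  induction m' with
  | zero => exact Nat.le_zero.mp h ▸ hP
  | succ m' ih =>
      rcases Nat.lt_or_ge m (m' + 1) with h' | h'
      · exact diffOp_mono m' (ih (Nat.lt_succ_iff.mp h'))
      · exact Nat.le_antisymm h h' ▸ hP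

lemma diffOp_mul_mem : ∀ (N a b : ℕ) (P Q : Module.End k R), a + b = N →
    P ∈ diffOp k R a → Q ∈ diffOp k R b → P * Q ∈ diffOp k R N := by
  intro N
  induction N using Nat.strong_induction_on with
  | _ N ih =>
    intro a b P Q hab hP hQ
    match N with
    | 0 =>
      have ha : a = 0 := Nat.eq_zero_of_add_eq_zero_right hab
      have hb : b = 0 := Nat.eq_zero_of_add_eq_zero_left hab
      subst ha; subst hb
      obtain ⟨u, hu⟩ := hP; obtain ⟨v, hv⟩ := hQ
      exact ⟨u * v, by
        show lm k (u * v) = P * Q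
        rw [lm_mul, show lm k u = P from hu, show lm k v = Q from hv]⟩
    | N + 1 =>
      intro r
      show adOp r (P * Q) ∈ diffOp k R N
      rw [adOp_mul]
      apply diffOp_add_mem N
      · -- P * adOp r Q ∈ D N
        match b, hQ with
        | 0, hQ =>
            obtain ⟨v, hv⟩ := hQ
            rw [← show lm k v = Q from hv, adOp_lm, mul_zero]
            exact diffOp_zero_mem N
        | b + 1, hQ =>
            have : a + b = N := by omega
            exact ih N (Nat.lt_succ_self N) a b P _ this hP (hQ r)
      · match a, hP with
        | 0, hP =>
            obtain ⟨u, hu⟩ := hP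
            rw [← show lm k u = P from hu, adOp_lm, zero_mul]
            exact diffOp_zero_mem N
        | a + 1, hP =>
            have : a + b = N := by omega
            exact ih N (Nat.lt_succ_self N) a b _ Q this (hP r) hQ

lemma der_mem_diffOp_one (δ : Derivation k R R) :
    (δ : Module.End k R) ∈ diffOp k R 1 := fun r => by
  show adOp r (δ : Module.End k R) ∈ diffOp k R 0
  rw [adOp_der]; exact lm_mem _

lemma diffOp_zero_eval {X : Module.End k R} (hX : X ∈ diffOp k R 0) (y : R) :
    X y = y * X 1 := by
  obtain ⟨a, ha⟩ := hX
  rw [← show lm k a = X from ha]; simp [mul_comm]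

-- iterated commutators
noncomputable def chainOp : ∀ (m : ℕ), Module.End k R → (Fin m → R) → Module.End k R
  | 0, X, _ => X
  | m + 1, X, v => chainOp m (adOp (v 0) X) (Fin.tail v)

@[simp] lemma chainOp_zero (X : Module.End k R) (v : Fin 0 → R) : chainOp 0 X v = X := rfl

lemma chainOp_succ (m : ℕ) (X : Module.End k R) (v : Fin (m + 1) → R) :
    chainOp (m + 1) X v = chainOp m (adOp (v 0) X) (Fin.tail v) := rfl

lemma chainOp_mem : ∀ (m j : ℕ) (X : Module.End k R) (v : Fin m → R),
    X ∈ diffOp k R (j + m) → chainOp m X v ∈ diffOp k R j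
  | 0, j, X, v, hX => hX
  | m + 1, j, X, v, hX =>
      chainOp_mem m j (adOp (v 0) X) (Fin.tail v) (by
        have : X ∈ diffOp k R ((j + m) + 1) := by
          rwa [show (j + m) + 1 = j + (m + 1) from by omega]
        exact this (v 0))

lemma chainOp_add : ∀ (m : ℕ) (X Y : Module.End k R) (v : Fin m → R),
    chainOp m (X + Y) v = chainOp m X v + chainOp m Y v
  | 0, X, Y, v => rfl
  | m + 1, X, Y, v => by
      rw [chainOp_succ, chainOp_succ, chainOp_succ, adOp_add_right, chainOp_add]

lemma chainOp_sub : ∀ (m : ℕ) (X Y : Module.End k R) (v : Fin m → R),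
    chainOp m (X - Y) v = chainOp m X v - chainOp m Y v
  | 0, X, Y, v => rfl
  | m + 1, X, Y, v => by
      rw [chainOp_succ, chainOp_succ, chainOp_succ, adOp_sub_right, chainOp_sub]

lemma chainOp_smul : ∀ (m : ℕ) (c : k) (X : Module.End k R) (v : Fin m → R),
    chainOp m (c • X) v = c • chainOp m X v
  | 0, c, X, v => rfl
  | m + 1, c, X, v => by
      rw [chainOp_succ, chainOp_succ, adOp_smul_right, chainOp_smul]

lemma chainOp_sum {ι : Type*} : ∀ (m : ℕ) (s : Finset ι) (f : ι → Module.End k R) (v : Fin m → R),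
    chainOp m (∑ i ∈ s, f i) v = ∑ i ∈ s, chainOp m (f i) v
  | 0, s, f, v => rfl
  | m + 1, s, f, v => by
      rw [chainOp_succ, adOp_sum_right, chainOp_sum]
      exact Finset.sum_congr rfl fun i _ => (chainOp_succ m (f i) v).symm

lemma chainOp_mul_lm_right : ∀ (m : ℕ) (X : Module.End k R) (u : R) (v : Fin m → R),
    chainOp m (X * lm k u) v = chainOp m X v * lm k u
  | 0, X, u, v => rfl
  | m + 1, X, u, v => by
      rw [chainOp_succ, adOp_mul_lm_right, chainOp_mul_lm_right, chainOp_succ]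

lemma chainOp_lm_mul_left : ∀ (m : ℕ) (X : Module.End k R) (u : R) (v : Fin m → R),
    chainOp m (lm k u * X) v = lm k u * chainOp m X v
  | 0, X, u, v => rfl
  | m + 1, X, u, v => by
      rw [chainOp_succ, adOp_lm_mul_left, chainOp_lm_mul_left, chainOp_succ]

-- Fin gymnastics helpers
lemma comp_succAbove_zero {m : ℕ} (v : Fin (m + 1) → R) :
    v ∘ (0 : Fin (m + 1)).succAbove = Fin.tail v := by
  funext s; simp [Fin.tail]

lemma comp_succAbove_succ_zero {m : ℕ} (v : Fin (m + 2) → R) (t : Fin (m + 1)) :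
    (v ∘ (t.succ).succAbove) 0 = v 0 := by
  simp [Fin.succ_succAbove_zero]

lemma tail_comp_succAbove {m : ℕ} (v : Fin (m + 2) → R) (t : Fin (m + 1)) :
    Fin.tail (v ∘ (t.succ).succAbove) = Fin.tail v ∘ t.succAbove := by
  funext s
  simp only [Fin.tail, Function.comp_apply, Fin.succ_succAbove_succ]

lemma cons_comp_succAbove_succ {m : ℕ} (y : R) (b : Fin (m + 1) → R) (t : Fin (m + 1)) :
    (Fin.cons y b : Fin (m + 2) → R) ∘ (t.succ).succAbove = Fin.cons y (b ∘ t.succAbove) := by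
  funext s
  induction s using Fin.cases with
  | zero => simp [Fin.succ_succAbove_zero]
  | succ s' => simp [Fin.succ_succAbove_succ]

lemma chainOp_pull : ∀ (m : ℕ) (X : Module.End k R) (v : Fin (m + 1) → R) (t : Fin (m + 1)),
    chainOp (m + 1) X v = chainOp m (adOp (v t) X) (v ∘ t.succAbove) := by
  intro m
  induction m with
  | zero =>
      intro X v t
      have ht : t = 0 := Fin.fin_one_eq_zero t
      subst ht
      rw [chainOp_succ, comp_succAbove_zero]
  | succ m ih =>
      intro X v t
      induction t using Fin.cases with
      | zero => rw [chainOp_succ, comp_succAbove_zero]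
      | succ t' =>
          rw [chainOp_succ, ih (adOp (v 0) X) (Fin.tail v) t',
            show Fin.tail v t' = v t'.succ from rfl, adOp_comm,
            show (chainOp (m+1) (adOp (v t'.succ) X) (v ∘ (t'.succ).succAbove) : Module.End k R)
              = chainOp m (adOp ((v ∘ (t'.succ).succAbove) 0) (adOp (v t'.succ) X))
                  (Fin.tail (v ∘ (t'.succ).succAbove)) from chainOp_succ _ _ _,
            comp_succAbove_succ_zero, tail_comp_succAbove]

-- evaluation of the full commutator chain at 1
noncomputable def PhiOp (m : ℕ) (X : Module.End k R) (v : Fin m → R) : R :=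
  chainOp m X v 1

lemma PhiOp_succ (m : ℕ) (X : Module.End k R) (v : Fin (m + 1) → R) :
    PhiOp (m + 1) X v = PhiOp m (adOp (v 0) X) (Fin.tail v) := rfl

lemma PhiOp_cons (m : ℕ) (X : Module.End k R) (a : R) (w : Fin m → R) :
    PhiOp (m + 1) X (Fin.cons a w) = PhiOp m (adOp a X) w := by
  rw [PhiOp_succ]; simp

lemma PhiOp_sub (m : ℕ) (X Y : Module.End k R) (v : Fin m → R) :
    PhiOp m (X - Y) v = PhiOp m X v - PhiOp m Y v := by
  rw [PhiOp, chainOp_sub]; rfl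

lemma PhiOp_smul (m : ℕ) (c : k) (X : Module.End k R) (v : Fin m → R) :
    PhiOp m (c • X) v = c • PhiOp m X v := by
  rw [PhiOp, chainOp_smul]; rfl

lemma PhiOp_sum {ι : Type*} (m : ℕ) (s : Finset ι) (f : ι → Module.End k R) (v : Fin m → R) :
    PhiOp m (∑ i ∈ s, f i) v = ∑ i ∈ s, PhiOp m (f i) v := by
  rw [PhiOp, chainOp_sum]
  exact LinearMap.sum_apply _ _ _

lemma PhiOp_pull (m : ℕ) (X : Module.End k R) (v : Fin (m + 1) → R) (t : Fin (m + 1)) :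
    PhiOp (m + 1) X v = PhiOp m (adOp (v t) X) (v ∘ t.succAbove) := by
  rw [PhiOp, chainOp_pull m X v t]; rfl

/-- pull-symmetry of `PhiOp` -/
lemma PhiOp_sym (m : ℕ) (X : Module.End k R) (v : Fin (m + 1) → R) (t : Fin (m + 1)) :
    PhiOp (m + 1) X (Fin.cons (v t) (v ∘ t.succAbove)) = PhiOp (m + 1) X v := by
  rw [PhiOp_cons, PhiOp_pull m X v t]

lemma PhiOp_cons_add (m : ℕ) (X : Module.End k R) (a b : R) (w : Fin m → R) :
    PhiOp (m + 1) X (Fin.cons (a + b) w)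
      = PhiOp (m + 1) X (Fin.cons a w) + PhiOp (m + 1) X (Fin.cons b w) := by
  rw [PhiOp_cons, PhiOp_cons, PhiOp_cons, adOp_add_arg, PhiOp, chainOp_add]; rfl

lemma PhiOp_cons_smul (m : ℕ) (X : Module.End k R) (c : k) (a : R) (w : Fin m → R) :
    PhiOp (m + 1) X (Fin.cons (c • a) w) = c • PhiOp (m + 1) X (Fin.cons a w) := by
  rw [PhiOp_cons, PhiOp_cons, adOp_smul_arg, PhiOp, chainOp_smul]; rfl

lemma PhiOp_cons_leibniz (m : ℕ) {X : Module.End k R} (hX : X ∈ diffOp k R (m + 1))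
    (a b : R) (w : Fin m → R) :
    PhiOp (m + 1) X (Fin.cons (a * b) w)
      = a * PhiOp (m + 1) X (Fin.cons b w) + b * PhiOp (m + 1) X (Fin.cons a w) := by
  rw [PhiOp_cons, adOp_leibniz, PhiOp, chainOp_add, LinearMap.add_apply,
    chainOp_mul_lm_right, chainOp_lm_mul_left]
  have h1 : (chainOp m (adOp a X) w * lm k b) 1 = chainOp m (adOp a X) w b := by
    simp [Module.End.mul_apply]
  have h2 : (lm k a * chainOp m (adOp b X) w) 1 = a * chainOp m (adOp b X) w 1 := by
    simp [Module.End.mul_apply]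
  rw [h1, h2]
  have hmem : chainOp m (adOp a X) w ∈ diffOp k R 0 :=
    chainOp_mem m 0 _ w (by rw [Nat.zero_add]; exact hX a)
  rw [diffOp_zero_eval hmem b]
  rw [PhiOp_cons, PhiOp_cons]
  ring_nf
  rfl

lemma PhiOp_prod_right : ∀ (m : ℕ) (X : Module.End k R), X ∈ diffOp k R m →
    ∀ (δ : Derivation k R R) (v : Fin (m + 1) → R),
    PhiOp (m + 1) (X * (δ : Module.End k R)) v
      = ∑ t : Fin (m + 1), PhiOp m X (v ∘ t.succAbove) * δ (v t) := by
  intro m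
  induction m with
  | zero =>
      intro X hX δ v
      rw [Fin.sum_univ_one]
      rw [PhiOp_succ, PhiOp, chainOp_zero, adOp_mul, adOp_der, LinearMap.add_apply]
      have h1 : (X * lm k (δ (v 0))) 1 = X (δ (v 0)) := by
        simp [Module.End.mul_apply]
      have h2 : (adOp (v 0) X * (δ : Module.End k R)) 1 = 0 := by
        have : ((δ : Module.End k R) : R → R) 1 = 0 := δ.map_one_eq_zero
        simp [Module.End.mul_apply, this]
      rw [h1, h2, add_zero, diffOp_zero_eval hX (δ (v 0))]
      rw [show PhiOp 0 X (v ∘ Fin.succAbove 0) = X 1 from rfl]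
      ring
  | succ m ih =>
      intro X hX δ v
      rw [PhiOp_succ, adOp_mul, adOp_der, PhiOp, chainOp_add, LinearMap.add_apply]
      have first : chainOp (m + 1) (X * lm k (δ (v 0))) (Fin.tail v) 1
          = PhiOp (m + 1) X (v ∘ (0 : Fin (m + 2)).succAbove) * δ (v 0) := by
        rw [chainOp_mul_lm_right]
        have : (chainOp (m + 1) X (Fin.tail v) * lm k (δ (v 0))) 1
            = chainOp (m + 1) X (Fin.tail v) (δ (v 0)) := by
          simp [Module.End.mul_apply]
        rw [this, diffOp_zero_eval (chainOp_mem (m+1) 0 _ _ (by simpa using hX)) (δ (v 0)),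
          comp_succAbove_zero]
        ring_nf
        rfl
      have hX0 : adOp (v 0) X ∈ diffOp k R m := hX (v 0)
      have second : chainOp (m + 1) (adOp (v 0) X * (δ : Module.End k R)) (Fin.tail v) 1
          = ∑ t : Fin (m + 1),
              PhiOp (m + 1) X (v ∘ (t.succ).succAbove) * δ (v t.succ) := by
        have hih := ih (adOp (v 0) X) hX0 δ (Fin.tail v)
        rw [show chainOp (m + 1) (adOp (v 0) X * (δ : Module.End k R)) (Fin.tail v) 1
            = PhiOp (m + 1) (adOp (v 0) X * (δ : Module.End k R)) (Fin.tail v) from rfl, hih]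
        apply Finset.sum_congr rfl
        intro t _
        have harg : PhiOp m (adOp (v 0) X) (Fin.tail v ∘ t.succAbove)
            = PhiOp (m + 1) X (v ∘ (t.succ).succAbove) := by
          rw [PhiOp_succ, comp_succAbove_succ_zero, tail_comp_succAbove]
        rw [harg]
        rfl
      rw [first, second]
      exact (Fin.sum_univ_succ
        (fun t : Fin (m + 1 + 1) => PhiOp (m + 1) X (v ∘ t.succAbove) * δ (v t))).symm

/-- descent: an operator of order `m+1` all of whose full symbols vanish has order `m`. -/
lemma diffOp_descend : ∀ (m : ℕ) (P : Module.End k R), P ∈ diffOp k R (m + 1) →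
    (∀ v : Fin (m + 1) → R, PhiOp (m + 1) P v = 0) → P ∈ diffOp k R m := by
  intro m
  induction m with
  | zero =>
      intro P hP hv
      refine ⟨P 1, ?_⟩
      ext y
      have h0 : ∀ a : R, adOp a P = 0 := by
        intro a
        have hmem : adOp a P ∈ diffOp k R 0 := hP a
        obtain ⟨u, hu⟩ := hmem
        have : adOp a P 1 = 0 := hv (fun _ => a)
        rw [← show lm k u = adOp a P from hu] at this ⊢
        simp only [lm_apply, mul_one] at this
        rw [this]
        ext z; simp
      have hc := congrArg (fun (T : Module.End k R) => T 1) (h0 y)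
      simp only [adOp, LinearMap.sub_apply, Module.End.mul_apply, lm_apply, mul_one,
        LinearMap.zero_apply] at hc
      have hPy : P y = y * P 1 := by
        have h := sub_eq_zero.mp hc
        simpa [mul_comm] using h
      show P 1 * y = P y
      rw [hPy]; ring
  | succ m ih =>
      intro P hP hv r
      show adOp r P ∈ diffOp k R m
      apply ih (adOp r P) (hP r)
      intro v
      have : PhiOp (m + 2) P (Fin.cons r v) = 0 := hv _
      rwa [PhiOp_cons] at this

/-- Build a derivation from a function satisfying the derivation identities. -/
noncomputable def mkDer (f : R → R)
    (hadd : ∀ a b, f (a + b) = f a + f b)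
    (hsmul : ∀ (c : k) (a : R), f (c • a) = c • f a)
    (hleib : ∀ a b, f (a * b) = a * f b + b * f a) : Derivation k R R where
  toFun := f
  map_add' := hadd
  map_smul' := fun c a => by simpa using hsmul c a
  map_one_eq_zero' := by
    have h := hleib 1 1
    simp only [one_mul, mul_one] at h
    exact right_eq_add.mp h
  leibniz' := fun a b => by simpa [smul_eq_mul] using hleib a b

@[simp] lemma mkDer_apply (f : R → R) (hadd hsmul hleib) (a : R) :
    (mkDer f hadd hsmul hleib : Derivation k R R) a = f a := rfl

/-- evaluation of a derivation at a point, as an additive monoid hom -/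
noncomputable def evalAtHom (a : R) : Derivation k R R →+ R where
  toFun := fun D => D a
  map_zero' := Derivation.zero_apply a
  map_add' := fun D E => Derivation.add_apply a

lemma basis_expand {n : ℕ} (B : Module.Basis (Fin n) R (Derivation k R R))
    (D : Derivation k R R) (a : R) :
    ∑ i : Fin n, B.repr D i * (B i) a = D a := by
  have h := congrArg (evalAtHom a) (B.sum_repr D)
  rw [map_sum] at h
  simpa [evalAtHom, Derivation.smul_apply, smul_eq_mul] using h

lemma PhiOp_one_lm_mul_der (c : R) (E : Derivation k R R) (v : Fin 1 → R) :
    PhiOp 1 (lm k c * (E : Module.End k R)) v = c * E (v 0) := by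
  rw [PhiOp_succ, adOp_lm_mul_left, adOp_der]
  show (lm k c * lm k (E (v 0))) 1 = c * E (v 0)
  rw [← lm_mul]
  simp

lemma main_extraction [CharZero k] {n : ℕ} (B : Module.Basis (Fin n) R (Derivation k R R)) :
    ∀ (m : ℕ) (φ : (Fin (m + 1) → R) → R),
    (∀ (a b : R) (w : Fin m → R),
      φ (Fin.cons (a + b) w) = φ (Fin.cons a w) + φ (Fin.cons b w)) →
    (∀ (c : k) (a : R) (w : Fin m → R),
      φ (Fin.cons (c • a) w) = c • φ (Fin.cons a w)) →
    (∀ (a b : R) (w : Fin m → R),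
      φ (Fin.cons (a * b) w) = a * φ (Fin.cons b w) + b * φ (Fin.cons a w)) →
    (∀ (v : Fin (m + 1) → R) (t : Fin (m + 1)),
      φ (Fin.cons (v t) (v ∘ t.succAbove)) = φ v) →
    ∃ Q : Module.End k R, Q ∈ Algebra.adjoin k (diffOp k R 1) ∧ Q ∈ diffOp k R (m + 1) ∧
      ∀ v, PhiOp (m + 1) Q v = φ v := by
  intro m
  induction m with
  | zero =>
      intro φ Hadd Hsmul Hleib _
      set w0 : Fin 0 → R := fun i => i.elim0 with hw0
      set δ : Derivation k R R :=
        mkDer (fun a => φ (Fin.cons a w0))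
          (fun a b => Hadd a b w0) (fun c a => Hsmul c a w0)
          (fun a b => Hleib a b w0) with hδ
      refine ⟨∑ i : Fin n, lm k (B.repr δ i) * (B i : Module.End k R), ?_, ?_, ?_⟩
      · apply Subalgebra.sum_mem
        intro i _
        exact mul_mem
          (Algebra.subset_adjoin (diffOp_mono 0 (lm_mem _)))
          (Algebra.subset_adjoin (der_mem_diffOp_one (B i)))
      · apply diffOp_sum_mem
        intro i _
        exact diffOp_mul_mem 1 0 1 _ _ rfl (lm_mem _) (der_mem_diffOp_one (B i))
      · intro v
        rw [PhiOp_sum]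
        have : ∀ i : Fin n, PhiOp 1 (lm k (B.repr δ i) * (B i : Module.End k R)) v
            = B.repr δ i * (B i) (v 0) := fun i => PhiOp_one_lm_mul_der _ _ v
        rw [Finset.sum_congr rfl fun i _ => this i, basis_expand B δ (v 0)]
        rw [hδ, mkDer_apply]
        congr 1
        funext s
        induction s using Fin.cases with
        | zero => rfl
        | succ i => exact i.elim0
  | succ m ih =>
      intro φ Hadd Hsmul Hleib Hsym
      -- swapping the first two slots
      have swap01 : ∀ (y z : R) (w : Fin m → R),
          φ (Fin.cons y (Fin.cons z w)) = φ (Fin.cons z (Fin.cons y w)) := by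
        intro y z w
        have h := Hsym (Fin.cons y (Fin.cons z w)) ((0 : Fin (m + 1)).succ)
        rw [Fin.cons_succ, Fin.cons_zero, cons_comp_succAbove_succ, comp_succAbove_zero,
          Fin.tail_cons] at h
        exact h.symm
      -- the family of derivations obtained by freezing all but the first slot
      set δφ : (Fin (m + 1) → R) → Derivation k R R :=
        fun w => mkDer (fun a => φ (Fin.cons a w))
          (fun a b => Hadd a b w) (fun c a => Hsmul c a w)
          (fun a b => Hleib a b w) with hδφ
      have δφ_apply : ∀ (w : Fin (m + 1) → R) (a : R), δφ w a = φ (Fin.cons a w) :=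
        fun w a => rfl
      -- derivation-valued identities in the remaining slots
      have dadd : ∀ (a b : R) (w : Fin m → R),
          δφ (Fin.cons (a + b) w) = δφ (Fin.cons a w) + δφ (Fin.cons b w) := by
        intro a b w
        apply Derivation.ext; intro y
        rw [Derivation.add_apply, δφ_apply, δφ_apply, δφ_apply,
          swap01 y (a + b) w, Hadd, swap01 a y w, swap01 b y w]
      have dsmul : ∀ (c : k) (a : R) (w : Fin m → R),
          δφ (Fin.cons (c • a) w) = (algebraMap k R c) • δφ (Fin.cons a w) := by
        intro c a w
        apply Derivation.ext; intro y
        rw [Derivation.smul_apply, δφ_apply, δφ_apply,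
          swap01 y (c • a) w, Hsmul, swap01 a y w, smul_eq_mul, Algebra.smul_def]
      have dleib : ∀ (a b : R) (w : Fin m → R),
          δφ (Fin.cons (a * b) w) = a • δφ (Fin.cons b w) + b • δφ (Fin.cons a w) := by
        intro a b w
        apply Derivation.ext; intro y
        rw [Derivation.add_apply, Derivation.smul_apply, Derivation.smul_apply,
          δφ_apply, δφ_apply, δφ_apply,
          swap01 y (a * b) w, Hleib, swap01 b y w, swap01 a y w, smul_eq_mul, smul_eq_mul]
      have dsym : ∀ (b : Fin (m + 1) → R) (t : Fin (m + 1)),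
          δφ (Fin.cons (b t) (b ∘ t.succAbove)) = δφ b := by
        intro b t
        apply Derivation.ext; intro y
        rw [δφ_apply, δφ_apply, swap01 y (b t) (b ∘ t.succAbove)]
        have h := Hsym (Fin.cons y b) t.succ
        rw [Fin.cons_succ, cons_comp_succAbove_succ] at h
        exact h
      -- coordinates of the derivations
      set χ : Fin n → (Fin (m + 1) → R) → R :=
        fun i w => B.repr (δφ w) i with hχ
      have hQ : ∀ i : Fin n,
          ∃ Q : Module.End k R, Q ∈ Algebra.adjoin k (diffOp k R 1) ∧
            Q ∈ diffOp k R (m + 1) ∧ ∀ v, PhiOp (m + 1) Q v = χ i v := by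
        intro i
        apply ih (χ i)
        · intro a b w
          rw [hχ]; simp only
          rw [dadd, map_add, Finsupp.add_apply]
        · intro c a w
          rw [hχ]; simp only
          rw [dsmul, map_smul, Finsupp.smul_apply, smul_eq_mul, ← Algebra.smul_def]
        · intro a b w
          rw [hχ]; simp only
          rw [dleib, map_add, Finsupp.add_apply, map_smul, map_smul,
            Finsupp.smul_apply, Finsupp.smul_apply, smul_eq_mul, smul_eq_mul]
        · intro v t
          rw [hχ]; simp only
          rw [dsym]
      choose Qf hQA hQD hQΦ using hQ
      refine ⟨(((m + 2 : ℕ) : k))⁻¹ • ∑ i : Fin n, Qf i * (B i : Module.End k R),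
        ?_, ?_, ?_⟩
      · apply Subalgebra.smul_mem
        apply Subalgebra.sum_mem
        intro i _
        exact mul_mem (hQA i) (Algebra.subset_adjoin (der_mem_diffOp_one (B i)))
      · apply diffOp_smul_mem
        apply diffOp_sum_mem
        intro i _
        exact diffOp_mul_mem (m + 2) (m + 1) 1 _ _ rfl (hQD i) (der_mem_diffOp_one (B i))
      · intro v
        rw [PhiOp_smul, PhiOp_sum]
        have hterm : ∀ i : Fin n,
            PhiOp (m + 2) (Qf i * (B i : Module.End k R)) v
              = ∑ t : Fin (m + 2), PhiOp (m + 1) (Qf i) (v ∘ t.succAbove) * (B i) (v t) :=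
          fun i => PhiOp_prod_right (m + 1) (Qf i) (hQD i) (B i) v
        rw [Finset.sum_congr rfl fun i _ => hterm i, Finset.sum_comm]
        have hinner : ∀ t : Fin (m + 2),
            ∑ i : Fin n, PhiOp (m + 1) (Qf i) (v ∘ t.succAbove) * (B i) (v t) = φ v := by
          intro t
          have : ∀ i : Fin n, PhiOp (m + 1) (Qf i) (v ∘ t.succAbove) = χ i (v ∘ t.succAbove) :=
            fun i => hQΦ i _
          rw [Finset.sum_congr rfl fun i _ => by rw [this i]]
          rw [hχ]; simp only
          rw [basis_expand B (δφ (v ∘ t.succAbove)) (v t), δφ_apply, Hsym]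
        rw [Finset.sum_congr rfl fun t _ => hinner t, Finset.sum_const]
        simp only [Finset.card_univ, Fintype.card_fin, smul_eq_mul]
        rw [show ((m + 2 : ℕ) • φ v) = ((m + 2 : ℕ) : k) • φ v from
          (Nat.cast_smul_eq_nsmul k _ _).symm]
        rw [smul_smul, inv_mul_cancel₀ (by exact_mod_cast (Nat.succ_ne_zero (m + 1)) : ((m + 2 : ℕ) : k) ≠ 0), one_smul]

end DiffOpAux

open DiffOpAux in
/-- Let `R` be an allowed regular local `k`-algebra over a field `k` of
characteristic `0`, i.e. a noetherian regular local ring whose module of `k`-linear derivations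
`T_{R/k}` is free of rank `dim R`.  Then the ring of differential operators
`D_{R/k} = ⋃ₘ D^m_{R/k}` is generated as a `k`-algebra by its first order part `D^1_{R/k}`. -/
theorem diffOp_generated_by_first_order
    (k : Type u) (R : Type v) [Field k] [CharZero k] [CommRing R] [Algebra k R]
    [IsLocalRing R] [IsNoetherianRing R]
    (hWJ : ∃ n : ℕ, ringKrullDim R = (n : WithBot ℕ∞) ∧
      (∃ x : Fin n → R, Ideal.span (Set.range x) = maximalIdeal R) ∧
      Nonempty (Module.Basis (Fin n) R (Derivation k R R))) :
    ∀ m : ℕ, diffOp k R m ⊆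
      (Algebra.adjoin k (diffOp k R 1) : Subalgebra k (Module.End k R)) := by

  obtain ⟨n, -, -, ⟨B⟩⟩ := hWJ
  intro m
  induction m with
  | zero =>
      intro P hP
      exact Algebra.subset_adjoin (diffOp_mono 0 hP)
  | succ m ihm =>
      intro P hP
      obtain ⟨Q, hQA, hQD, hQΦ⟩ := main_extraction B m (PhiOp (m + 1) P)
        (fun a b w => PhiOp_cons_add m P a b w)
        (fun c a w => PhiOp_cons_smul m P c a w)
        (fun a b w => PhiOp_cons_leibniz m hP a b w)
        (fun v t => PhiOp_sym m P v t)
      have hsub : P - Q ∈ diffOp k R m :=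
        diffOp_descend m (P - Q) (diffOp_sub_mem (m + 1) hP hQD)
          (fun v => by rw [PhiOp_sub, hQΦ, sub_self])
      have hPQ : P = (P - Q) + Q := (sub_add_cancel P Q).symm
      rw [hPQ]
      exact add_mem (ihm hsub) hQA
end

section
/- Let R be an allowed regular local k-algebra of dimension n with regular system of parameters x_1, …, x_n and derivations ∂_{x_1}, …, ∂_{x_n} ∈ T_{R/k} satisfying ∂_{x_i}(x_j) = δ_{ij}. If P ∈ D^m_{R/k} and P(X^α) = 0 for every monomial X^α = x_1^{α_1}⋯x_n^{α_n} with |α| = α_1 + ⋯ + α_n ≤ m, then P = 0. -/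
open IsLocalRing

universe u v

section Aux

variable {k : Type u} {R : Type v} [Field k] [CommRing R] [Algebra k R]

/-- Multiplying a monomial by `x j` bumps the exponent at `j`. -/
lemma mul_prod_pow_eq {n : ℕ} (x : Fin n → R) (α : Fin n → ℕ) (j : Fin n) :
    x j * ∏ i, x i ^ α i = ∏ i, x i ^ Function.update α j (α j + 1) i := by
  have hf : (fun i => x i ^ Function.update α j (α j + 1) i)
      = Function.update (fun i => x i ^ α i) j (x j ^ (α j + 1)) := by
    funext i
    rcases eq_or_ne i j with rfl | h
    · simp
    · simp [Function.update_of_ne h]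
  rw [hf, Finset.prod_update_of_mem (Finset.mem_univ j),
    ← Finset.mul_prod_erase Finset.univ (fun i => x i ^ α i) (Finset.mem_univ j),
    pow_succ]
  simp only [Finset.sdiff_singleton_eq_erase]
  ring

lemma sum_update_succ {n : ℕ} (α : Fin n → ℕ) (j : Fin n) :
    ∑ i, Function.update α j (α j + 1) i = (∑ i, α i) + 1 := by
  rw [Finset.sum_update_of_mem (Finset.mem_univ j),
    ← Finset.add_sum_erase Finset.univ α (Finset.mem_univ j)]
  simp only [Finset.sdiff_singleton_eq_erase]
  omega

/-- A derivation vanishing on all the `x j` is zero, given that the module of derivations is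
free of rank `n` and there exist derivations `D i` with `D i (x j) = δᵢⱼ`. -/
lemma deriv_eq_zero_of_vanish {n : ℕ} (x : Fin n → R) (D : Fin n → Derivation k R R)
    (hD : ∀ i j, D i (x j) = if i = j then 1 else 0)
    (hbasis : Nonempty (Module.Basis (Fin n) R (Derivation k R R)))
    (d : Derivation k R R) (hd : ∀ j, d (x j) = 0) : d = 0 := by
  obtain ⟨b⟩ := hbasis
  let φ : Derivation k R R →ₗ[R] (Fin n → R) :=
    { toFun := fun d j => d (x j)
      map_add' := by intro d e; funext j; simp
      map_smul' := by intro r d; funext j; simp }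
  have hφsurj : Function.Surjective φ := by
    intro c
    refine ⟨∑ i, c i • D i, ?_⟩
    funext j
    rw [map_sum]
    simp only [map_smul]
    have : ∀ i, (c i • φ (D i)) j = c i * (if i = j then 1 else 0) := by
      intro i; simp [φ, hD]
    simp only [Finset.sum_apply, this, mul_ite, mul_one, mul_zero]
    simp
  let g : (Fin n → R) →ₗ[R] (Fin n → R) := φ ∘ₗ b.equivFun.symm.toLinearMap
  have hgsurj : Function.Surjective g := hφsurj.comp b.equivFun.symm.surjective
  have hginj : Function.Injective g :=
    OrzechProperty.injective_of_surjective_endomorphism g hgsurj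
  have hφinj : Function.Injective φ := by
    intro u v huv
    have h1 : ∀ w : Derivation k R R, g (b.equivFun w) = φ w := fun w => by
      simp only [g, LinearMap.comp_apply, LinearEquiv.coe_coe,
        LinearEquiv.symm_apply_apply]
    have : g (b.equivFun u) = g (b.equivFun v) := by rw [h1, h1, huv]
    exact b.equivFun.injective (hginj this)
  have : φ d = φ 0 := by
    funext j; simp [φ, hd j]
  exact hφinj this

/-- If `P ∈ D^m` commutes with multiplication by every `x j`, then `P` is multiplication
by `P 1`. -/
lemma diffOp_comm_eq_lmul {n : ℕ} (x : Fin n → R) (D : Fin n → Derivation k R R)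
    (hD : ∀ i j, D i (x j) = if i = j then 1 else 0)
    (hbasis : Nonempty (Module.Basis (Fin n) R (Derivation k R R))) :
    ∀ (m : ℕ) (P : Module.End k R), P ∈ diffOp k R m →
      (∀ j, P * Algebra.lmul k R (x j) = Algebra.lmul k R (x j) * P) →
      P = Algebra.lmul k R (P 1) := by
  intro m
  induction m with
  | zero =>
    rintro P ⟨r, rfl⟩ -
    congr 1
    simp
  | succ m ih =>
    intro P hP hcomm
    set L : R → Module.End k R := fun r => Algebra.lmul k R r with hL
    have key : ∀ a : R, P * L a - L a * P = L (P a - a * P 1) := by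
      intro a
      have h2 : ∀ j, (P * L a - L a * P) * L (x j) = L (x j) * (P * L a - L a * P) := by
        intro j
        have e1 : P * L (x j) - L (x j) * P = 0 := by rw [hcomm j, sub_self]
        have e2 : L a * L (x j) - L (x j) * L a = 0 := by
          simp only [hL, ← map_mul]
          rw [mul_comm, sub_self]
        have hiden : (P * L a - L a * P) * L (x j) - L (x j) * (P * L a - L a * P)
            = ((P * L (x j) - L (x j) * P) * L a - L a * (P * L (x j) - L (x j) * P))
              + (P * (L a * L (x j) - L (x j) * L a)
                 - (L a * L (x j) - L (x j) * L a) * P) := by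
          simp only [mul_sub, sub_mul, mul_assoc]
          abel
        rw [e1, e2] at hiden
        simp only [zero_mul, mul_zero, sub_zero, sub_self, add_zero] at hiden
        exact sub_eq_zero.mp hiden
      have := ih (P * L a - L a * P) (hP a) h2
      have hval : (P * L a - L a * P) 1 = P a - a * P 1 := by
        simp [hL, LinearMap.sub_apply, Module.End.mul_apply]
      rw [hval] at this
      exact this
    have keyapp : ∀ a b : R, P (a * b) = a * P b + (P a - a * P 1) * b := by
      intro a b
      have := congrArg (fun T : Module.End k R => T b) (key a)
      simp only [LinearMap.sub_apply, Module.End.mul_apply, hL,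
        Algebra.coe_lmul_eq_mul, LinearMap.mul_apply_apply] at this
      linear_combination this
    have hPx : ∀ j, P (x j) = x j * P 1 := by
      intro j
      have := congrArg (fun T : Module.End k R => T 1) (hcomm j)
      simp only [Module.End.mul_apply, hL, Algebra.coe_lmul_eq_mul,
        LinearMap.mul_apply_apply, mul_one] at this
      exact this
    let Qd : Derivation k R R :=
    { toLinearMap := P - Algebra.lmul k R (P 1)
      map_one_eq_zero' := by
        simp [LinearMap.sub_apply]
      leibniz' := by
        intro a b
        have := keyapp a b
        simp only [LinearMap.sub_apply, Algebra.coe_lmul_eq_mul,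
          LinearMap.mul_apply_apply, smul_eq_mul]
        linear_combination this }
    have hQx : ∀ j, Qd (x j) = 0 := by
      intro j
      show (P - Algebra.lmul k R (P 1)) (x j) = 0
      simp only [LinearMap.sub_apply, Algebra.coe_lmul_eq_mul,
        LinearMap.mul_apply_apply, hPx j]
      ring
    have hQ0 : Qd = 0 := deriv_eq_zero_of_vanish x D hD hbasis Qd hQx
    ext r
    have : Qd r = 0 := by rw [hQ0]; rfl
    have h2 : P r - P 1 * r = 0 := by
      change (P - Algebra.lmul k R (P 1)) r = 0 at this
      simpa only [LinearMap.sub_apply, Algebra.coe_lmul_eq_mul,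
        LinearMap.mul_apply_apply] using this
    simp only [Algebra.coe_lmul_eq_mul, LinearMap.mul_apply_apply]
    linear_combination h2

end Aux

/-- Let `R` be an allowed regular local `k`-algebra of dimension `n` (`k` a
field of characteristic `0`), with a regular system of parameters `x 1, …, x n` and derivations
`D 1, …, D n ∈ T_{R/k}` satisfying `D i (x j) = δ_{ij}`.  If `P ∈ D^m_{R/k}` kills every
monomial `X^α = x 1 ^ α 1 ⋯ x n ^ α n` with `|α| ≤ m`, then `P = 0`. -/
theorem diffOp_eq_zero_of_kills_monomials
    (k : Type u) (R : Type v) [Field k] [CharZero k] [CommRing R] [Algebra k R]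
    [IsLocalRing R] [IsNoetherianRing R]
    (n : ℕ) (hdim : ringKrullDim R = (n : WithBot ℕ∞))
    (x : Fin n → R) (hx : Ideal.span (Set.range x) = maximalIdeal R)
    (D : Fin n → Derivation k R R)
    (hD : ∀ i j, D i (x j) = if i = j then 1 else 0)
    (hbasis : Nonempty (Module.Basis (Fin n) R (Derivation k R R)))
    (m : ℕ) (P : Module.End k R) (hP : P ∈ diffOp k R m)
    (hkill : ∀ α : Fin n → ℕ, (∑ i, α i) ≤ m → P (∏ i, x i ^ α i) = 0) :
    P = 0 := by
  have hone : (∏ i, x i ^ (fun _ : Fin n => 0) i) = (1 : R) := by simp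
  revert P
  induction m with
  | zero =>
    intro P hP hkill
    rw [show diffOp k R 0 = Set.range (Algebra.lmul k R) from rfl] at hP
    obtain ⟨r, rfl⟩ := hP
    have h1 : Algebra.lmul k R r (∏ i, x i ^ (fun _ : Fin n => 0) i) = 0 :=
      hkill (fun _ => 0) (by simp)
    rw [hone] at h1
    have hr : r = 0 := by simpa using h1
    rw [hr, map_zero]
  | succ m ih =>
    intro P hP hkill
    have hP' : ∀ r : R, P * Algebra.lmul k R r - Algebra.lmul k R r * P ∈ diffOp k R m :=
      hP
    have hcomm : ∀ j, P * Algebra.lmul k R (x j) = Algebra.lmul k R (x j) * P := by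
      intro j
      have hQkill : ∀ α : Fin n → ℕ, (∑ i, α i) ≤ m →
          (P * Algebra.lmul k R (x j) - Algebra.lmul k R (x j) * P) (∏ i, x i ^ α i) = 0 := by
        intro α hα
        simp only [LinearMap.sub_apply, Module.End.mul_apply, Algebra.coe_lmul_eq_mul,
          LinearMap.mul_apply_apply]
        rw [mul_prod_pow_eq x α j,
          hkill _ (by rw [sum_update_succ]; omega),
          hkill α (by omega), mul_zero, sub_zero]
      have := ih (P * Algebra.lmul k R (x j) - Algebra.lmul k R (x j) * P)
        (hP' (x j)) hQkill
      rw [sub_eq_zero] at this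
      exact this
    have hmain := diffOp_comm_eq_lmul x D hD hbasis (m + 1) P hP hcomm
    have h1 : P (∏ i, x i ^ (fun _ : Fin n => 0) i) = 0 :=
      hkill (fun _ => 0) (by simp)
    rw [hone] at h1
    rw [hmain, h1, map_zero]
end

section
/- Let g_A be a Lie algebroid over a local noetherian k-algebra A such that A is g_A-simple. If g_A acts on an A-module M of finite type, then M is a free A-module. In particular, g_A itself (with the adjoint action) is free over A. -/
open IsLocalRing TensorProduct

universe u v w

/-- A Lie algebroid over `A/k`: an `A`-module of finite type with a `k`-Lie algebra structure
and an anchor map `α : g → T_{A/k}` that is `A`-linear and a morphism of `k`-Lie algebras,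
satisfying the Leibniz rule `[δ, rη] = α(δ)(r)·η + r·[δ, η]`. -/
structure LieAlgebroid (k : Type u) (A : Type v) (g : Type w) [CommRing k] [CommRing A]
    [Algebra k A] [LieRing g] [LieAlgebra k g] [Module A g] [IsScalarTower k A g] where
  anchor : g →ₗ[A] Derivation k A A
  anchor_bracket : ∀ x y : g, anchor ⁅x, y⁆ = ⁅anchor x, anchor y⁆
  leibniz : ∀ (x y : g) (r : A), ⁅x, r • y⁆ = anchor x r • y + r • ⁅x, y⁆

namespace LieAlgebroid

variable {k : Type u} {A : Type v} {g : Type w} [CommRing k] [CommRing A]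
    [Algebra k A] [LieRing g] [LieAlgebra k g] [Module A g] [IsScalarTower k A g]

/-- A `g_A`-invariant ideal of `A`. -/
def InvariantIdeal (L : LieAlgebroid k A g) (I : Ideal A) : Prop :=
  ∀ x : g, ∀ a ∈ I, L.anchor x a ∈ I

/-- `A` is a simple module over the Lie algebroid: no nonzero proper invariant ideal. -/
def IsSimpleBase (L : LieAlgebroid k A g) : Prop :=
  ∀ I : Ideal A, L.InvariantIdeal I → I = ⊥ ∨ I = ⊤

/-- An action (not necessarily `A`-linear) of the Lie algebroid `g_A` on an `A`-module `M`:
a map `ρ : g → End_k(M)` with `ρ(δ)(r·m) = α(δ)(r)·m + r·ρ(δ)(m)`. -/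
structure Action (L : LieAlgebroid k A g) (M : Type*) [AddCommGroup M] [Module A M]
    [Module k M] [IsScalarTower k A M] : Type _ where
  ρ : g → M → M
  ρ_add : ∀ (x : g) (m m' : M), ρ x (m + m') = ρ x m + ρ x m'
  ρ_smulk : ∀ (x : g) (c : k) (m : M), ρ x (c • m) = c • ρ x m
  ρ_leibniz : ∀ (x : g) (r : A) (m : M), ρ x (r • m) = L.anchor x r • m + r • ρ x m

end LieAlgebroid

theorem LieAlgebroid.free_of_action {k : Type u} {A : Type v} {g : Type w} [CommRing k]
    [CommRing A] [IsLocalRing A] [Algebra k A]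
    [LieRing g] [LieAlgebra k g] [Module A g] [IsScalarTower k A g]
    (L : LieAlgebroid k A g) (hsimple : L.IsSimpleBase)
    (M : Type*) [AddCommGroup M] [Module A M] [Module k M] [IsScalarTower k A M]
    [Module.Finite A M] (act : L.Action M) : Module.Free A M := by
  classical
  set κ := ResidueField A
  let b := Module.Basis.ofVectorSpace κ (κ ⊗[A] M)
  set ι := Module.Basis.ofVectorSpaceIndex κ (κ ⊗[A] M)
  have hfex : ∀ i : ι, ∃ m : M, TensorProduct.mk A κ M 1 m = b i := fun i =>
    TensorProduct.mk_surjective A M κ Ideal.Quotient.mk_surjective (b i)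
  choose f hf using hfex
  set π : (ι →₀ A) →ₗ[A] M := Finsupp.linearCombination A f with hπ
  have hsurj : Function.Surjective π := by
    rw [← LinearMap.range_eq_top, Finsupp.range_linearCombination]
    exact IsLocalRing.span_eq_top_of_tmul_eq_basis f b hf
  -- ρ as additive monoid hom
  let ρ : g → M →+ M := fun x => AddMonoidHom.mk' (act.ρ x) (act.ρ_add x)
  have hρ0 : ∀ x : g, act.ρ x 0 = 0 := fun x => (ρ x).map_zero
  -- the ideal of coordinates of syzygies
  set S : Set A := {r | ∃ v ∈ LinearMap.ker π, ∃ i, v i = r} with hS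
  set I : Ideal A := Ideal.span S with hI
  have hmemS : ∀ v ∈ LinearMap.ker π, ∀ i, v i ∈ I := fun v hv i =>
    Ideal.subset_span ⟨v, hv, i, rfl⟩
  -- coordinates of kernel elements lie in the maximal ideal
  have hcoord : ∀ v ∈ LinearMap.ker π, ∀ i, v i ∈ maximalIdeal A := by
    intro v hv i
    have h0 : Finsupp.linearCombination κ b (v.mapRange (residue A) (map_zero _)) = 0 := by
      have : TensorProduct.mk A κ M 1 (π v) = 0 := by
        rw [LinearMap.mem_ker.mp hv, map_zero]
      rw [hπ, Finsupp.linearCombination_apply, map_finsuppSum] at this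
      rw [Finsupp.linearCombination_apply, Finsupp.sum_mapRange_index (by simp)]
      rw [← this]
      refine Finsupp.sum_congr fun j _ => ?_
      rw [map_smul, hf j, ← algebraMap_smul κ (v j) (b j)]
      rfl
    have := b.repr_linearCombination (v.mapRange (residue A) (map_zero _))
    rw [h0, map_zero] at this
    have h1 : residue A (v i) = 0 := by
      have h2 := (DFunLike.congr_fun this i).symm
      rwa [Finsupp.mapRange_apply, Finsupp.zero_apply] at h2
    exact (IsLocalRing.residue_eq_zero_iff _).mp h1
  have hIm : I ≤ maximalIdeal A := by
    rw [hI, Ideal.span_le]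
    rintro r ⟨v, hv, i, rfl⟩
    exact hcoord v hv i
  -- invariance
  have hinv : L.InvariantIdeal I := by
    intro x a ha
    set D := L.anchor x with hD
    induction ha using Submodule.span_induction with
    | mem r hr =>
      obtain ⟨v, hv, i, rfl⟩ := hr
      -- choose lifts of ρ x (f j)
      choose w hw using fun j : ι => hsurj (act.ρ x (f j))
      -- the new syzygy
      set u : ι →₀ A := v.mapRange (fun a => D a) (map_zero D) + v.sum (fun j a => a • w j)
        with hu
      have hu_ker : u ∈ LinearMap.ker π := by
        rw [LinearMap.mem_ker, hu, map_add]
        have h2 : π (v.sum fun j a => a • w j) = v.sum fun j a => a • act.ρ x (f j) := by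
          rw [map_finsuppSum]
          exact Finsupp.sum_congr fun j _ => by rw [map_smul, hw j]
        have h1 : π (v.mapRange (fun a => D a) (map_zero D)) =
            v.sum fun j a => D a • f j := by
          rw [hπ, Finsupp.linearCombination_apply, Finsupp.sum_mapRange_index (by simp)]
        rw [h1, h2, ← Finsupp.sum_add]
        have h3 : (ρ x) (π v) = 0 := by rw [LinearMap.mem_ker.mp hv, map_zero]
        rw [hπ, Finsupp.linearCombination_apply, map_finsuppSum] at h3
        rw [← h3]
        refine Finsupp.sum_congr fun j _ => ?_
        exact (act.ρ_leibniz x (v j) (f j)).symm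
      have h5 : D (v i) = u i - (v.sum fun j a => a • w j) i := by
        rw [hu, Finsupp.add_apply, Finsupp.mapRange_apply, add_sub_cancel_right]
      rw [h5]
      refine sub_mem (hmemS u hu_ker i) ?_
      rw [Finsupp.sum_apply, Finsupp.sum]
      refine Ideal.sum_mem I fun j hj => ?_
      rw [Finsupp.smul_apply, smul_eq_mul]
      exact Ideal.mul_mem_right _ I (hmemS v hv j)
    | zero => simp
    | add a c _ _ iha ihc => rw [map_add]; exact add_mem iha ihc
    | smul r a hmem ih =>
      rw [smul_eq_mul, Derivation.leibniz]
      simp only [smul_eq_mul]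
      exact add_mem (Ideal.mul_mem_left I r ih) (Ideal.mul_mem_right (D r) I hmem)
  -- conclude I = ⊥
  have hIbot : I = ⊥ := by
    rcases hsimple I hinv with h | h
    · exact h
    · exact absurd (top_le_iff.mp (h ▸ hIm))
        (IsLocalRing.maximalIdeal.isMaximal A).ne_top
  have hinj : Function.Injective π := by
    rw [← LinearMap.ker_eq_bot]
    rw [eq_bot_iff]
    intro v hv
    have : ∀ i, v i = 0 := fun i => by
      have := hmemS v hv i
      rwa [hIbot, Ideal.mem_bot] at this
    simp only [Submodule.mem_bot]
    ext i; exact this i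
  exact Module.Free.of_equiv (LinearEquiv.ofBijective π ⟨hinj, hsurj⟩)

/-- Let `g_A` be a Lie algebroid over a local noetherian `k`-algebra `A`
(`k` algebraically closed of characteristic `0`, a coefficient field of `A`) such that `A` is
`g_A`-simple.  If `g_A` acts on an `A`-module `M` of finite type, then `M` is free over `A`;
in particular `g_A` itself (with the adjoint action) is a free `A`-module. -/
theorem free_of_action_of_simple
    (k : Type u) (A : Type v) (g : Type w) [Field k] [CharZero k] [IsAlgClosed k]
    [CommRing A] [IsLocalRing A] [IsNoetherianRing A] [Algebra k A]
    (hcoef : Function.Bijective (algebraMap k (ResidueField A)))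
    [LieRing g] [LieAlgebra k g] [Module A g] [IsScalarTower k A g] [Module.Finite A g]
    (L : LieAlgebroid k A g) (hsimple : L.IsSimpleBase)
    (M : Type v) [AddCommGroup M] [Module A M] [Module k M] [IsScalarTower k A M]
    [Module.Finite A M] (act : L.Action M) :
    Module.Free A M ∧ Module.Free A g := by
  have adj : L.Action g :=
    { ρ := fun x y => ⁅x, y⁆
      ρ_add := fun x m m' => lie_add x m m'
      ρ_smulk := fun x c m => lie_smul c x m
      ρ_leibniz := fun x r m => L.leibniz x m r }
  exact ⟨L.free_of_action hsimple M act, L.free_of_action hsimple g adj⟩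
end

section
/- Let g_R be a Lie algebroid over a local k-algebra R such that R is g_R-simple, and let 0 → M_1 → M → M_2 → 0 be an exact sequence of g_R-modules that are of finite type over R. Then M is a local system over g_R if and only if both M_1 and M_2 are local systems over g_R. -/
open IsLocalRing

universe u v w

namespace LieAlgebroid

variable {k : Type u} {A : Type v} {g : Type w} [CommRing k] [CommRing A]
    [Algebra k A] [LieRing g] [LieAlgebra k g] [Module A g] [IsScalarTower k A g]

/-- Modules over a Lie algebroid. -/
structure AlgebroidModule (L : LieAlgebroid k A g) (M : Type*) [AddCommGroup M]
    [Module A M] : Type _ where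
  ρ : g → M → M
  ρ_add_left : ∀ x y m, ρ (x + y) m = ρ x m + ρ y m
  ρ_smul_left : ∀ (a : A) (x : g) (m : M), ρ (a • x) m = a • ρ x m
  ρ_add : ∀ x m m', ρ x (m + m') = ρ x m + ρ x m'
  ρ_bracket : ∀ x y m, ρ ⁅x, y⁆ m = ρ x (ρ y m) - ρ y (ρ x m)
  ρ_leibniz : ∀ (x : g) (r : A) (m : M), ρ x (r • m) = L.anchor x r • m + r • ρ x m

variable {L : LieAlgebroid k A g} {M : Type*} [AddCommGroup M] [Module A M]

/-- A `g`-invariant `A`-submodule. -/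
def AlgebroidModule.Invariant (σ : AlgebroidModule L M) (N : Submodule A M) : Prop :=
  ∀ x : g, ∀ m ∈ N, σ.ρ x m ∈ N

/-- The length `ℓ_{g_R}(M)` in the lattice of `g_R`-submodules. -/
noncomputable def AlgebroidModule.length (σ : AlgebroidModule L M) : WithBot ℕ∞ :=
  Order.krullDim {N : Submodule A M // σ.Invariant N}

/-- The length `ℓ_{g_k}(k ⊗ M)` of the fibre of `M` over the fibre Lie algebra
`g_k = k ⊗ ker(anchor)`, computed via the lattice of submodules of `M` containing `m_A·M`
which are invariant under the kernel of the anchor. -/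
noncomputable def AlgebroidModule.fibreLength [IsLocalRing A] (σ : AlgebroidModule L M) :
    WithBot ℕ∞ :=
  Order.krullDim {N : Submodule A M //
    (maximalIdeal A) • (⊤ : Submodule A M) ≤ N ∧
    ∀ x : g, L.anchor x = 0 → ∀ m ∈ N, σ.ρ x m ∈ N}

/-- `M` is a local system over `g_R`: `ℓ_{g_R}(M) = ℓ_{g_k}(k ⊗ M)`. -/
def AlgebroidModule.IsLocalSystem [IsLocalRing A] (σ : AlgebroidModule L M) : Prop :=
  σ.length = σ.fibreLength

end LieAlgebroid
open Order

section OrderAux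

lemma aux_krullDim_le_add_of_jointly_strict {γ α β : Type*} [PartialOrder γ] [PartialOrder α]
    [Preorder β] (u : γ → α) (hu : Monotone u) (v : γ → β) (hv : Monotone v)
    (hj : ∀ x y : γ, x < y → u x = u y → v x < v y) :
    krullDim γ ≤ krullDim α + krullDim β := by
  have key : ∀ (n : ℕ) (p : LTSeries γ), p.length = n →
      (p.length : ℕ∞) ≤ height (u p.last) + height (v p.last) := by
    intro n
    induction n with
    | zero => intro p hp; simp [hp]
    | succ n ih =>
      intro p hp
      have hlen : p.length ≠ 0 := by omega
      have hrel : p.eraseLast.last < p.last := p.eraseLast_last_rel_last hlen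
      have hlen' : p.eraseLast.length = n := by
        simp [RelSeries.eraseLast_length, hp]
      have IH := ih p.eraseLast hlen'
      rw [hlen'] at IH
      have step : height (u p.eraseLast.last) + height (v p.eraseLast.last) + 1 ≤
          height (u p.last) + height (v p.last) := by
        rcases lt_or_eq_of_le (hu hrel.le) with hu' | hu'
        · have h1 : height (u p.eraseLast.last) + 1 ≤ height (u p.last) := by
            rw [height_eq_iSup_lt_height (u p.last)]
            exact le_iSup₂_of_le _ hu' le_rfl
          calc height (u p.eraseLast.last) + height (v p.eraseLast.last) + 1
              = (height (u p.eraseLast.last) + 1) + height (v p.eraseLast.last) := by ring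
            _ ≤ height (u p.last) + height (v p.last) :=
                add_le_add h1 (height_mono (hv hrel.le))
        · have hv' : v p.eraseLast.last < v p.last := hj _ _ hrel hu'
          have h1 : height (v p.eraseLast.last) + 1 ≤ height (v p.last) := by
            rw [height_eq_iSup_lt_height (v p.last)]
            exact le_iSup₂_of_le _ hv' le_rfl
          calc height (u p.eraseLast.last) + height (v p.eraseLast.last) + 1
              = height (u p.eraseLast.last) + (height (v p.eraseLast.last) + 1) := by ring
            _ ≤ height (u p.last) + height (v p.last) :=
                add_le_add (height_mono hu'.le) h1
      calc (p.length : ℕ∞) = (n : ℕ∞) + 1 := by rw [hp]; push_cast; ring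
        _ ≤ height (u p.eraseLast.last) + height (v p.eraseLast.last) + 1 :=
            add_le_add IH le_rfl
        _ ≤ _ := step
  have hx : ∀ x : γ, height x ≤ height (u x) + height (v x) := by
    intro x
    refine height_le fun p hp => ?_
    have := key p.length p rfl
    rwa [hp] at this
  rw [krullDim_eq_iSup_height (α := γ)]
  refine iSup_le fun x => ?_
  calc ((height x : ℕ∞) : WithBot ℕ∞) ≤ ((height (u x) + height (v x) : ℕ∞) : WithBot ℕ∞) := by
        exact_mod_cast hx x
    _ = (height (u x) : WithBot ℕ∞) + (height (v x) : WithBot ℕ∞) := by push_cast; rfl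
    _ ≤ krullDim α + krullDim β := add_le_add (height_le_krullDim _) (height_le_krullDim _)

lemma aux_add_krullDim_le_of_sandwich {γ α β : Type*} [Preorder γ] [Preorder α] [Preorder β]
    (c : γ) (sα : α → γ) (hsα : StrictMono sα) (hca : ∀ a, sα a ≤ c)
    (sβ : β → γ) (hsβ : StrictMono sβ) (hcb : ∀ b, c ≤ sβ b) :
    krullDim α + krullDim β ≤ krullDim γ := by
  have h1 : krullDim α ≤ ((height c : ℕ∞) : WithBot ℕ∞) := by
    rcases isEmpty_or_nonempty α with h | h
    · rw [krullDim_eq_bot]; exact bot_le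
    · rw [krullDim_eq_iSup_length]
      refine WithBot.coe_le_coe.2 (iSup_le fun p => ?_)
      have : (p.map sα hsα).length ≤ height c :=
        Order.length_le_height (by simpa using hca p.last)
      simpa using this
  have h2 : krullDim β ≤ ((coheight c : ℕ∞) : WithBot ℕ∞) := by
    rcases isEmpty_or_nonempty β with h | h
    · rw [krullDim_eq_bot]; exact bot_le
    · rw [krullDim_eq_iSup_length]
      refine WithBot.coe_le_coe.2 (iSup_le fun q => ?_)
      have : (q.map sβ hsβ).length ≤ coheight c :=
        Order.length_le_coheight (by simpa using hcb q.head)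
      simpa using this
  have h3 : ((height c + coheight c : ℕ∞) : WithBot ℕ∞) ≤ krullDim γ := by
    have : Nonempty γ := ⟨c⟩
    rw [krullDim_eq_iSup_height_add_coheight_of_nonempty]
    exact WithBot.coe_le_coe.2 (le_iSup (fun x : γ => height x + coheight x) c)
  calc krullDim α + krullDim β ≤ ((height c : ℕ∞) : WithBot ℕ∞) + ((coheight c : ℕ∞) : WithBot ℕ∞) :=
        add_le_add h1 h2
    _ = ((height c + coheight c : ℕ∞) : WithBot ℕ∞) := by push_cast; rfl
    _ ≤ krullDim γ := h3

lemma aux_krullDim_le_nat {α : Type*} [Preorder α] (n : ℕ)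
    (h : ∀ p : LTSeries α, p.length ≤ n) : krullDim α ≤ (n : WithBot ℕ∞) := by
  rcases isEmpty_or_nonempty α with hα | hα
  · rw [krullDim_eq_bot]; exact bot_le
  · rw [krullDim_eq_iSup_length]
    exact WithBot.coe_le_coe.2 (iSup_le fun p => by exact_mod_cast h p)

lemma aux_cancel {a₁ a₂ b₁ b₂ : WithBot ℕ∞} (h : a₁ + a₂ = b₁ + b₂)
    (h1 : a₁ ≤ b₁) (h2 : a₂ ≤ b₂) (ha₁ : a₁ ≠ ⊥) (ha₂ : a₂ ≠ ⊥)
    (hb₁ : b₁ ≠ ⊤) (hb₂ : b₂ ≠ ⊤) : a₁ = b₁ ∧ a₂ = b₂ := by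
  have hb₁' : b₁ ≠ ⊥ := fun hb => ha₁ (le_bot_iff.1 (hb ▸ h1))
  have hb₂' : b₂ ≠ ⊥ := fun hb => ha₂ (le_bot_iff.1 (hb ▸ h2))
  lift b₁ to ℕ∞ using hb₁'
  lift b₂ to ℕ∞ using hb₂'
  lift a₁ to ℕ∞ using ha₁
  lift a₂ to ℕ∞ using ha₂
  have hb₁'' : b₁ ≠ ⊤ := by simpa using hb₁
  have hb₂'' : b₂ ≠ ⊤ := by simpa using hb₂
  rw [WithBot.coe_le_coe] at h1 h2
  have ha₁'' : a₁ ≠ ⊤ := fun hh => hb₁'' (top_le_iff.1 (hh ▸ h1))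
  have ha₂'' : a₂ ≠ ⊤ := fun hh => hb₂'' (top_le_iff.1 (hh ▸ h2))
  lift b₁ to ℕ using hb₁''
  lift b₂ to ℕ using hb₂''
  lift a₁ to ℕ using ha₁''
  lift a₂ to ℕ using ha₂''
  have h' : a₁ + a₂ = b₁ + b₂ := by exact_mod_cast h
  rw [Nat.cast_le] at h1 h2
  constructor <;> [skip; skip] <;> norm_cast <;> omega

end OrderAux
open Order IsLocalRing LieAlgebroid Submodule Set

section AlgAux

variable {k : Type*} {A : Type*} {g : Type*} [CommRing k] [CommRing A]
    [Algebra k A] [LieRing g] [LieAlgebra k g] [Module A g] [IsScalarTower k A g]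
    {L : LieAlgebroid k A g} {M : Type*} [AddCommGroup M] [Module A M]

namespace LieAlgebroid.AlgebroidModule

lemma ρ_zero (σ : AlgebroidModule L M) (x : g) : σ.ρ x 0 = 0 := by
  have := σ.ρ_add x 0 0
  simpa using this.symm

lemma ρ_sum (σ : AlgebroidModule L M) (x : g) {ι : Type*} (s : Finset ι) (f : ι → M) :
    σ.ρ x (∑ i ∈ s, f i) = ∑ i ∈ s, σ.ρ x (f i) := by
  classical
  induction s using Finset.induction with
  | empty => simpa using σ.ρ_zero x
  | insert _ _ h ih => rw [Finset.sum_insert h, Finset.sum_insert h, σ.ρ_add, ih]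

lemma invariant_bot (σ : AlgebroidModule L M) : σ.Invariant ⊥ := by
  intro x m hm
  rw [Submodule.mem_bot] at hm
  simp [hm, σ.ρ_zero x]

lemma invariant_top (σ : AlgebroidModule L M) : σ.Invariant ⊤ := fun _ _ _ => trivial

lemma invariant_sup {σ : AlgebroidModule L M} {N N' : Submodule A M}
    (h : σ.Invariant N) (h' : σ.Invariant N') : σ.Invariant (N ⊔ N') := by
  intro x m hm
  obtain ⟨a, ha, b, hb, rfl⟩ := Submodule.mem_sup.1 hm
  rw [σ.ρ_add]
  exact Submodule.mem_sup.2 ⟨_, h x a ha, _, h' x b hb, rfl⟩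

lemma invariant_inf {σ : AlgebroidModule L M} {N N' : Submodule A M}
    (h : σ.Invariant N) (h' : σ.Invariant N') : σ.Invariant (N ⊓ N') :=
  fun x m hm => ⟨h x m hm.1, h' x m hm.2⟩

end LieAlgebroid.AlgebroidModule

/-- Minimal generation relative to a submodule `N`. -/
lemma exists_minpres [IsLocalRing A] [Module.Finite A M] (N : Submodule A M) :
    ∃ (d : ℕ) (v : Fin d → M), (Submodule.span A (Set.range v) ⊔ N = ⊤) ∧
      ∀ x : Fin d → A, (∑ i, x i • v i) ∈ N → ∀ i, x i ∈ maximalIdeal A := by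
  classical
  have hP : ∃ d : ℕ, ∃ v : Fin d → M, Submodule.span A (Set.range v) ⊔ N = ⊤ := by
    obtain ⟨n, s, hs⟩ := Module.Finite.exists_fin (R := A) (M := M)
    exact ⟨n, s, by rw [hs]; exact top_sup_eq _⟩
  obtain ⟨d, v, hv, hmin⟩ : ∃ (d : ℕ) (v : Fin d → M),
      (Submodule.span A (Set.range v) ⊔ N = ⊤) ∧
      ∀ e, e < d → ¬ ∃ w : Fin e → M, Submodule.span A (Set.range w) ⊔ N = ⊤ := by
    obtain ⟨v, hv⟩ := Nat.find_spec hP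
    exact ⟨Nat.find hP, v, hv, fun e he hw => Nat.find_min hP he hw⟩
  refine ⟨d, v, hv, ?_⟩
  intro x hx i
  by_contra hxi
  have hu : IsUnit (x i) := IsLocalRing.notMem_maximalIdeal.1 hxi
  have hdpos : 0 < d := i.pos
  set e := d - 1 with he
  have hde : d = e + 1 := by omega
  let i' : Fin (e + 1) := Fin.cast hde i
  let v' : Fin (e + 1) → M := v ∘ Fin.cast hde.symm
  let w : Fin e → M := v' ∘ i'.succAbove
  have hvv' : ∀ j : Fin d, v j = v' (Fin.cast hde j) := by intro j; simp [v']
  have hw : Submodule.span A (Set.range w) ⊔ N = ⊤ := by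
    set S := Submodule.span A (Set.range w) ⊔ N with hS
    have hj : ∀ j : Fin (e+1), j ≠ i' → v' j ∈ S := by
      intro j hj
      obtain ⟨j', hj'⟩ := Fin.exists_succAbove_eq hj
      rw [← hj']
      exact le_sup_left (α := Submodule A M) (Submodule.subset_span ⟨j', rfl⟩)
    have hne : ∀ j : Fin d, j ≠ i → v j ∈ S := by
      intro j hji
      rw [hvv' j]
      refine hj _ fun hc => hji ?_
      have := congrArg (Fin.cast hde.symm) hc
      simpa [i'] using this
    have hvi : v i ∈ S := by
      have hsum : (∑ j, x j • v j) ∈ S := le_sup_right (α := Submodule A M) hx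
      have hsum' : (∑ j ∈ Finset.univ.erase i, x j • v j) ∈ S := by
        refine Submodule.sum_mem _ fun j hjmem => ?_
        exact Submodule.smul_mem _ _ (hne j (Finset.mem_erase.1 hjmem).1)
      have hsplit : (∑ j, x j • v j) = x i • v i + ∑ j ∈ Finset.univ.erase i, x j • v j :=
        (Finset.add_sum_erase _ _ (Finset.mem_univ i)).symm
      have hxi' : x i • v i ∈ S := by
        have : x i • v i = (∑ j, x j • v j) - ∑ j ∈ Finset.univ.erase i, x j • v j := by
          rw [hsplit, add_sub_cancel_right]
        rw [this]; exact Submodule.sub_mem _ hsum hsum'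
      have : (↑hu.unit⁻¹ : A) • (x i • v i) = v i := by
        rw [smul_smul, hu.val_inv_mul, one_smul]
      rw [← this]
      exact Submodule.smul_mem _ _ hxi'
    have hrange : Set.range v ⊆ (S : Set M) := by
      rintro _ ⟨j, rfl⟩
      by_cases hji : j = i
      · subst hji; exact hvi
      · exact hne j hji
    refine eq_top_iff.2 ?_
    rw [← hv]
    exact sup_le ((Submodule.span_le).2 hrange) le_sup_right
  exact hmin e (by omega) ⟨w, hw⟩

end AlgAux
section CoreAux

variable {k : Type*} {A : Type*} {g : Type*} [CommRing k] [CommRing A]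
    [Algebra k A] [LieRing g] [LieAlgebra k g] [Module A g] [IsScalarTower k A g]
    {L : LieAlgebroid k A g} {M : Type*} [AddCommGroup M] [Module A M]

/-- The coordinate-ideal engine: relative to a minimal presentation of `M/N`, any
invariant `N' ≤ N ⊔ m·M` containing `N` has trivial coordinates. -/
lemma core_lemma [IsLocalRing A] (hsimple : L.IsSimpleBase) (σ : AlgebroidModule L M)
    {N N' : Submodule A M} (hNN' : N ≤ N') (hinv : σ.Invariant N')
    (hle : N' ≤ N ⊔ (maximalIdeal A) • ⊤)
    {d : ℕ} {v : Fin d → M} (hspan : Submodule.span A (Set.range v) ⊔ N = ⊤)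
    (hmin : ∀ x : Fin d → A, (∑ i, x i • v i) ∈ N → ∀ i, x i ∈ maximalIdeal A) :
    ∀ x : Fin d → A, (∑ i, x i • v i) ∈ N' → x = 0 := by
  classical
  -- every element decomposes
  have hdec : ∀ t : M, ∃ c : Fin d → A, t - ∑ i, c i • v i ∈ N := by
    intro t
    have ht : t ∈ Submodule.span A (Set.range v) ⊔ N := by rw [hspan]; trivial
    obtain ⟨y, hy, z, hz, rfl⟩ := Submodule.mem_sup.1 ht
    obtain ⟨c, rfl⟩ := (mem_span_range_iff_exists_fun _).1 hy
    exact ⟨c, by simpa using hz⟩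
  -- elements of m • ⊤ decompose with coefficients in m
  have hdecm : ∀ μ ∈ ((maximalIdeal A) • ⊤ : Submodule A M), ∃ y : Fin d → A,
      (∀ i, y i ∈ maximalIdeal A) ∧ μ - ∑ i, y i • v i ∈ N := by
    intro μ hμ
    refine Submodule.smul_induction_on hμ ?_ ?_
    · intro r hr t _
      obtain ⟨c, hc⟩ := hdec t
      refine ⟨fun i => r * c i, fun i => Ideal.mul_mem_right _ _ hr, ?_⟩
      have : r • t - ∑ i, (r * c i) • v i = r • (t - ∑ i, c i • v i) := by
        rw [smul_sub, Finset.smul_sum]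
        congr 1
        · exact Finset.sum_congr rfl fun i _ => (smul_smul r (c i) (v i)).symm
      rw [this]
      exact Submodule.smul_mem _ _ hc
    · rintro μ₁ μ₂ ⟨y₁, hy₁, hy₁N⟩ ⟨y₂, hy₂, hy₂N⟩
      refine ⟨y₁ + y₂, fun i => Ideal.add_mem _ (hy₁ i) (hy₂ i), ?_⟩
      have : μ₁ + μ₂ - ∑ i, (y₁ + y₂) i • v i =
          (μ₁ - ∑ i, y₁ i • v i) + (μ₂ - ∑ i, y₂ i • v i) := by
        simp only [Pi.add_apply, add_smul, Finset.sum_add_distrib]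
        abel
      rw [this]
      exact Submodule.add_mem _ hy₁N hy₂N
  -- coordinates of elements of N' lie in m
  have hXm : ∀ x : Fin d → A, (∑ i, x i • v i) ∈ N' → ∀ i, x i ∈ maximalIdeal A := by
    intro x hx i
    obtain ⟨ν, hν, μ, hμ, hsum⟩ := Submodule.mem_sup.1 (hle hx)
    obtain ⟨y, hy, hyN⟩ := hdecm μ hμ
    have : (∑ j, (x j - y j) • v j) ∈ N := by
      have heq : (∑ j, (x j - y j) • v j) = ν + (μ - ∑ j, y j • v j) := by
        simp only [sub_smul, Finset.sum_sub_distrib]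
        rw [← hsum]; abel
      rw [heq]
      exact Submodule.add_mem _ hν hyN
    have := hmin _ this i
    have hxy : x i = (x i - y i) + y i := by ring
    rw [hxy]
    exact Ideal.add_mem _ this (hy i)
  -- the coordinate ideal
  set I : Ideal A := Ideal.span {r | ∃ x : Fin d → A, (∑ i, x i • v i) ∈ N' ∧ ∃ i, x i = r}
    with hI
  have hgen : ∀ (x : Fin d → A), (∑ i, x i • v i) ∈ N' → ∀ i, x i ∈ I :=
    fun x hx i => Ideal.subset_span ⟨x, hx, i, rfl⟩
  have hIm : I ≤ maximalIdeal A := by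
    rw [hI, Ideal.span_le]
    rintro r ⟨x, hx, i, rfl⟩
    exact hXm x hx i
  have hinvI : L.InvariantIdeal I := by
    intro δ
    -- coefficients for the action on generators
    have hρv : ∀ j, ∃ c : Fin d → A, σ.ρ δ (v j) - ∑ i, c i • v i ∈ N :=
      fun j => hdec (σ.ρ δ (v j))
    choose c hc using hρv
    have hstep : ∀ (x : Fin d → A), (∑ i, x i • v i) ∈ N' → ∀ i, L.anchor δ (x i) ∈ I := by
      intro x hx i
      set w : Fin d → A := fun i => L.anchor δ (x i) + ∑ j, x j * c j i with hwdef
      have hw : (∑ i, w i • v i) ∈ N' := by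
        have expand : ∑ i, w i • v i =
            σ.ρ δ (∑ j, x j • v j) - ∑ j, x j • (σ.ρ δ (v j) - ∑ i, c j i • v i) := by
          rw [σ.ρ_sum]
          have h1 : ∀ j, σ.ρ δ (x j • v j) = L.anchor δ (x j) • v j + x j • σ.ρ δ (v j) :=
            fun j => σ.ρ_leibniz δ (x j) (v j)
          simp only [h1, smul_sub, Finset.sum_add_distrib, Finset.sum_sub_distrib]
          simp only [hwdef, add_smul, Finset.sum_add_distrib]
          have h2 : ∑ i, (∑ j, x j * c j i) • v i = ∑ j, x j • ∑ i, c j i • v i := by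
            simp only [Finset.sum_smul, Finset.smul_sum, smul_smul]
            rw [Finset.sum_comm]
          rw [h2]
          abel
        rw [expand]
        refine Submodule.sub_mem _ (hinv δ _ hx) ?_
        exact hNN' (Submodule.sum_mem _ fun j _ => Submodule.smul_mem _ _ (hc j))
      have h1 : w i ∈ I := hgen w hw i
      have h2 : (∑ j, x j * c j i) ∈ I :=
        Ideal.sum_mem _ fun j _ => Ideal.mul_mem_right _ _ (hgen x hx j)
      have h3 : L.anchor δ (x i) = w i - ∑ j, x j * c j i := by
        simp [hwdef]
      rw [h3]
      exact Ideal.sub_mem _ h1 h2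
    -- closure ideal
    set S : Ideal A :=
      { carrier := {a | a ∈ I ∧ L.anchor δ a ∈ I}
        add_mem' := fun ha hb => ⟨Ideal.add_mem _ ha.1 hb.1, by
          rw [map_add]; exact Ideal.add_mem _ ha.2 hb.2⟩
        zero_mem' := ⟨Ideal.zero_mem _, by rw [map_zero]; exact Ideal.zero_mem _⟩
        smul_mem' := fun r a ha => ⟨Ideal.mul_mem_left _ _ ha.1, by
          have : L.anchor δ (r * a) = r * L.anchor δ a + a * L.anchor δ r := by
            rw [Derivation.leibniz]; ring_nf
          rw [smul_eq_mul, this]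
          exact Ideal.add_mem _ (Ideal.mul_mem_left _ _ ha.2)
            (Ideal.mul_mem_right _ _ ha.1)⟩ } with hS
    have hIS : I ≤ S := by
      rw [hI, Ideal.span_le]
      rintro r ⟨x, hx, i, rfl⟩
      exact ⟨hgen x hx i, hstep x hx i⟩
    intro a ha
    exact (hIS ha).2
  rcases hsimple I hinvI with h0 | htop
  · intro x hx
    funext i
    have := hgen x hx i
    rw [h0] at this
    simpa using this
  · exfalso
    have : (1 : A) ∈ maximalIdeal A := hIm (htop ▸ Submodule.mem_top)
    exact (Ideal.IsMaximal.ne_top (IsLocalRing.maximalIdeal.isMaximal A))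
      (Ideal.eq_top_iff_one _ |>.2 this)

end CoreAux
section Consequences

variable {k : Type*} {A : Type*} {g : Type*} [CommRing k] [CommRing A]
    [Algebra k A] [LieRing g] [LieAlgebra k g] [Module A g] [IsScalarTower k A g]
    {L : LieAlgebroid k A g} {M : Type*} [AddCommGroup M] [Module A M]

/-- Key rigidity: an invariant submodule trapped between `N` and `N ⊔ m·M` equals `N`. -/
lemma invariant_le_of_le_sup [IsLocalRing A] [Module.Finite A M]
    (hsimple : L.IsSimpleBase) (σ : AlgebroidModule L M)
    {N N' : Submodule A M} (hNN' : N ≤ N') (hinv : σ.Invariant N')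
    (hle : N' ≤ N ⊔ (maximalIdeal A) • ⊤) : N' ≤ N := by
  obtain ⟨d, v, hspan, hmin⟩ := exists_minpres (M := M) N
  have hX := core_lemma hsimple σ hNN' hinv hle hspan hmin
  intro n' hn'
  have : n' ∈ Submodule.span A (Set.range v) ⊔ N := by rw [hspan]; trivial
  obtain ⟨y, hy, z, hz, rfl⟩ := Submodule.mem_sup.1 this
  obtain ⟨c, rfl⟩ := (mem_span_range_iff_exists_fun _).1 hy
  have hc : (∑ i, c i • v i) ∈ N' := by
    have : (∑ i, c i • v i) = (∑ i, c i • v i + z) - z := by abel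
    rw [this]
    exact Submodule.sub_mem _ hn' (hNN' hz)
  rw [hX c hc]
  simpa using hz

/-- Every finite module over a simple Lie algebroid base is projective. -/
lemma algebroid_module_projective [IsLocalRing A] [Module.Finite A M]
    (hsimple : L.IsSimpleBase) (σ : AlgebroidModule L M) : Module.Projective A M := by
  obtain ⟨d, v, hspan, hmin⟩ := exists_minpres (M := M) (⊥ : Submodule A M)
  have hX := core_lemma hsimple σ le_rfl σ.invariant_bot (by simp) hspan hmin
  have hli : LinearIndependent A v := by
    rw [Fintype.linearIndependent_iff]
    intro c hc
    have := hX c (by rw [Submodule.mem_bot]; exact hc)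
    intro i
    exact congrFun this i
  have hspan' : ⊤ ≤ Submodule.span A (Set.range v) := by
    rw [← hspan]; simp
  exact Module.Projective.of_basis (Module.Basis.mk hli hspan')

end Consequences
section Finiteness

variable {k : Type*} {A : Type*} {g : Type*} [CommRing k] [CommRing A]
    [Algebra k A] [LieRing g] [LieAlgebra k g] [Module A g] [IsScalarTower k A g]
    {L : LieAlgebroid k A g} {M : Type*} [AddCommGroup M] [Module A M]

lemma fibreLength_ne_top [IsLocalRing A] [Module.Finite A M] (σ : AlgebroidModule L M) :
    σ.fibreLength ≠ ⊤ := by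
  classical
  set m : Ideal A := maximalIdeal A with hm
  set V := M ⧸ (m • ⊤ : Submodule A M) with hV
  letI : Module (A ⧸ m) V := inferInstance
  letI : Field (A ⧸ m) := Ideal.Quotient.field m
  haveI : IsScalarTower A (A ⧸ m) V := inferInstance
  haveI : Module.Finite (A ⧸ m) V := Module.Finite.of_restrictScalars_finite A (A ⧸ m) V
  -- transfer of submodules
  let T : Submodule A V → Submodule (A ⧸ m) V := fun N =>
    { carrier := N
      add_mem' := fun h1 h2 => N.add_mem h1 h2
      zero_mem' := N.zero_mem
      smul_mem' := by
        rintro ⟨a⟩ x hx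
        exact N.smul_mem a hx }
  have hT : ∀ N N' : Submodule A V, N < N' → T N < T N' := by
    intro N N' h
    refine lt_of_le_of_ne (fun x hx => h.le hx) (fun hc => h.ne ?_)
    ext x
    exact SetLike.ext_iff.1 hc x
  have bound : ∀ p : LTSeries {N : Submodule A M //
      (maximalIdeal A) • (⊤ : Submodule A M) ≤ N ∧
      ∀ x : g, L.anchor x = 0 → ∀ m' ∈ N, σ.ρ x m' ∈ N},
      p.length ≤ Module.finrank (A ⧸ m) V := by
    intro p
    let F : {N : Submodule A M // (maximalIdeal A) • (⊤ : Submodule A M) ≤ N ∧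
        ∀ x : g, L.anchor x = 0 → ∀ m' ∈ N, σ.ρ x m' ∈ N} → Submodule (A ⧸ m) V :=
      fun N => T (N.1.map (m • (⊤ : Submodule A M)).mkQ)
    have hF : StrictMono F := by
      intro N N' h
      refine hT _ _ ?_
      have hmono : N.1.map (m • ⊤ : Submodule A M).mkQ ≤ N'.1.map (m • ⊤ : Submodule A M).mkQ :=
        Submodule.map_mono h.le
      refine lt_of_le_of_ne hmono (fun hc => ?_)
      have h1 : N.1 = N'.1 := by
        have e1 : Submodule.comap (m • ⊤ : Submodule A M).mkQ
            (N.1.map (m • ⊤ : Submodule A M).mkQ) = N.1 := by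
          rw [Submodule.comap_map_eq, Submodule.ker_mkQ, sup_of_le_left N.2.1]
        have e2 : Submodule.comap (m • ⊤ : Submodule A M).mkQ
            (N'.1.map (m • ⊤ : Submodule A M).mkQ) = N'.1 := by
          rw [Submodule.comap_map_eq, Submodule.ker_mkQ, sup_of_le_left N'.2.1]
        rw [← e1, ← e2, hc]
      exact absurd (Subtype.ext h1) h.ne
    -- strict chain of subspaces
    have hchain : ∀ i : Fin (p.length + 1), (i : ℕ) ≤ Module.finrank (A ⧸ m) (F (p i)) := by
      intro i
      induction i using Fin.induction with
      | zero => simp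
      | succ j ih =>
        have hlt : F (p j.castSucc) < F (p j.succ) := hF (p.step j)
        have := Submodule.finrank_lt_finrank_of_lt hlt
        have hj := ih
        have hcs : (j.succ : ℕ) = (j.castSucc : ℕ) + 1 := by simp
        omega
    have hlast := hchain (Fin.last p.length)
    have : Module.finrank (A ⧸ m) (F (p (Fin.last p.length))) ≤ Module.finrank (A ⧸ m) V :=
      Submodule.finrank_le _
    simpa using le_trans (by simpa using hlast) this
  have hle : σ.fibreLength ≤ (Module.finrank (A ⧸ m) V : WithBot ℕ∞) :=
    aux_krullDim_le_nat _ bound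
  intro hc
  rw [hc] at hle
  have h0 : ((Module.finrank (A ⧸ m) V : ℕ) : WithBot ℕ∞) =
      (((Module.finrank (A ⧸ m) V : ℕ) : ℕ∞) : WithBot ℕ∞) := by norm_cast
  have h1 := top_le_iff.1 hle
  rw [h0] at h1
  exact WithTop.coe_ne_top (WithBot.coe_eq_top.1 h1)

end Finiteness
section Transfer

variable {k : Type*} {A : Type*} {g : Type*} [CommRing k] [CommRing A]
    [Algebra k A] [LieRing g] [LieAlgebra k g] [Module A g] [IsScalarTower k A g]
    {L : LieAlgebroid k A g} {M M' : Type*} [AddCommGroup M] [Module A M]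
    [AddCommGroup M'] [Module A M']

lemma ρ_closed_sup {s : Set g} (σ : AlgebroidModule L M) {N N' : Submodule A M}
    (h : ∀ x ∈ s, ∀ mm ∈ N, σ.ρ x mm ∈ N) (h' : ∀ x ∈ s, ∀ mm ∈ N', σ.ρ x mm ∈ N') :
    ∀ x ∈ s, ∀ mm ∈ N ⊔ N', σ.ρ x mm ∈ N ⊔ N' := by
  intro x hx mm hmm
  obtain ⟨a, ha, b, hb, rfl⟩ := Submodule.mem_sup.1 hmm
  rw [σ.ρ_add]
  exact Submodule.mem_sup.2 ⟨_, h x hx a ha, _, h' x hx b hb, rfl⟩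

lemma ρ_closed_comap {s : Set g} (σM : AlgebroidModule L M) (σN : AlgebroidModule L M')
    (φ : M →ₗ[A] M') (hφ : ∀ x mm, φ (σM.ρ x mm) = σN.ρ x (φ mm)) {Q : Submodule A M'}
    (hQ : ∀ x ∈ s, ∀ n ∈ Q, σN.ρ x n ∈ Q) :
    ∀ x ∈ s, ∀ mm ∈ Q.comap φ, σM.ρ x mm ∈ Q.comap φ := by
  intro x hx mm hmm
  rw [Submodule.mem_comap, hφ]
  exact hQ x hx _ hmm

lemma ρ_closed_map {s : Set g} (σM : AlgebroidModule L M) (σN : AlgebroidModule L M')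
    (φ : M →ₗ[A] M') (hφ : ∀ x mm, φ (σM.ρ x mm) = σN.ρ x (φ mm)) {Q : Submodule A M}
    (hQ : ∀ x ∈ s, ∀ mm ∈ Q, σM.ρ x mm ∈ Q) :
    ∀ x ∈ s, ∀ n ∈ Q.map φ, σN.ρ x n ∈ Q.map φ := by
  rintro x hx n ⟨mm, hmm, rfl⟩
  exact ⟨σM.ρ x mm, hQ x hx mm hmm, hφ x mm⟩

lemma ρ_closed_smul_top [IsLocalRing A] (σ : AlgebroidModule L M) :
    ∀ x : g, L.anchor x = 0 →
      ∀ mm ∈ ((maximalIdeal A) • ⊤ : Submodule A M),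
        σ.ρ x mm ∈ ((maximalIdeal A) • ⊤ : Submodule A M) := by
  intro x hx mm hmm
  refine Submodule.smul_induction_on hmm ?_ ?_
  · intro r hr t _
    have h1 : σ.ρ x (r • t) = L.anchor x r • t + r • σ.ρ x t := σ.ρ_leibniz x r t
    rw [h1, hx]
    simp only [Derivation.coe_zero, Pi.zero_apply, zero_smul, zero_add]
    exact Submodule.smul_mem_smul hr Submodule.mem_top
  · intro a b ha hb
    rw [σ.ρ_add]
    exact Submodule.add_mem _ ha hb

end Transfer
open LieAlgebroid

/-- Let `g_R` be a Lie algebroid over a local `k`-algebra `R` with `R`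
`g_R`-simple, and let `0 → M₁ → M → M₂ → 0` be an exact sequence of `g_R`-modules of finite
type over `R`.  Then `M` is a local system over `g_R` iff both `M₁` and `M₂` are. -/
theorem localSystem_iff_of_exact
    (k : Type u) (R : Type v) (g : Type w) [Field k] [CharZero k] [IsAlgClosed k]
    [CommRing R] [IsLocalRing R] [IsNoetherianRing R] [Algebra k R]
    (hcoef : Function.Bijective (algebraMap k (ResidueField R)))
    [LieRing g] [LieAlgebra k g] [Module R g] [IsScalarTower k R g] [Module.Finite R g]
    (L : LieAlgebroid k R g) (hsimple : L.IsSimpleBase)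
    (M₁ M M₂ : Type v) [AddCommGroup M₁] [Module R M₁] [Module.Finite R M₁]
    [AddCommGroup M] [Module R M] [Module.Finite R M]
    [AddCommGroup M₂] [Module R M₂] [Module.Finite R M₂]
    (σ₁ : AlgebroidModule L M₁) (σ : AlgebroidModule L M) (σ₂ : AlgebroidModule L M₂)
    (f : M₁ →ₗ[R] M) (p : M →ₗ[R] M₂)
    (hf : ∀ (x : g) (m : M₁), f (σ₁.ρ x m) = σ.ρ x (f m))
    (hp : ∀ (x : g) (m : M), p (σ.ρ x m) = σ₂.ρ x (p m))
    (hinj : Function.Injective f) (hsurj : Function.Surjective p)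
    (hexact : LinearMap.range f = LinearMap.ker p) :
    σ.IsLocalSystem ↔ (σ₁.IsLocalSystem ∧ σ₂.IsLocalSystem) := by
  classical
  have hpf : ∀ w : M₁, p (f w) = 0 := fun w =>
    LinearMap.mem_ker.1 (hexact ▸ LinearMap.mem_range_self f w)
  -- full invariance transfers
  have hfmap_inv : ∀ {N₁ : Submodule R M₁}, σ₁.Invariant N₁ → σ.Invariant (N₁.map f) := by
    intro N₁ h x mm hmm
    exact ρ_closed_map (s := Set.univ) σ₁ σ f hf (fun y _ => h y) x trivial mm hmm
  have hfcomap_inv : ∀ {N : Submodule R M}, σ.Invariant N → σ₁.Invariant (N.comap f) := by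
    intro N h x mm hmm
    exact ρ_closed_comap (s := Set.univ) σ₁ σ f hf (fun y _ => h y) x trivial mm hmm
  have hpmap_inv : ∀ {N : Submodule R M}, σ.Invariant N → σ₂.Invariant (N.map p) := by
    intro N h x mm hmm
    exact ρ_closed_map (s := Set.univ) σ σ₂ p hp (fun y _ => h y) x trivial mm hmm
  have hpcomap_inv : ∀ {N₂ : Submodule R M₂}, σ₂.Invariant N₂ → σ.Invariant (N₂.comap p) := by
    intro N₂ h x mm hmm
    exact ρ_closed_comap (s := Set.univ) σ σ₂ p hp (fun y _ => h y) x trivial mm hmm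
  have hrf_inv : σ.Invariant (LinearMap.range f) := by
    have := hfmap_inv σ₁.invariant_top
    rwa [Submodule.map_top] at this
  -- modularity rigidity
  have hraw : ∀ X Y : Submodule R M, X ≤ Y → X.comap f = Y.comap f → X.map p = Y.map p →
      X = Y := by
    intro X Y hXY h1 h2
    refine eq_of_le_of_inf_le_of_sup_le (z := LinearMap.range f) hXY ?_ ?_
    · have : Y ⊓ LinearMap.range f = X ⊓ LinearMap.range f := by
        rw [inf_comm, ← Submodule.map_comap_eq, ← h1, Submodule.map_comap_eq, inf_comm]
      exact this.le
    · have : Y ⊔ LinearMap.range f = X ⊔ LinearMap.range f := by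
        rw [hexact, ← Submodule.comap_map_eq, ← h2, Submodule.comap_map_eq]
      exact this.le
  -- Part A : additivity of length
  have ha : σ.length = σ₁.length + σ₂.length := by
    let c : {N : Submodule R M // σ.Invariant N} := ⟨LinearMap.range f, hrf_inv⟩
    let u : {N : Submodule R M // σ.Invariant N} → {N : Submodule R M₁ // σ₁.Invariant N} :=
      fun N => ⟨N.1.comap f, hfcomap_inv N.2⟩
    let v : {N : Submodule R M // σ.Invariant N} → {N : Submodule R M₂ // σ₂.Invariant N} :=
      fun N => ⟨N.1.map p, hpmap_inv N.2⟩
    have hu : Monotone u := fun a b hab => Submodule.comap_mono hab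
    have hv : Monotone v := fun a b hab => Submodule.map_mono hab
    have hj : ∀ x y, x < y → u x = u y → v x < v y := by
      intro x y hxy h1
      refine lt_of_le_of_ne (hv hxy.le) fun h2 => hxy.ne ?_
      exact Subtype.ext (hraw _ _ hxy.le (congrArg Subtype.val h1) (congrArg Subtype.val h2))
    have hle : σ.length ≤ σ₁.length + σ₂.length :=
      aux_krullDim_le_add_of_jointly_strict u hu v hv hj
    let sa : {N : Submodule R M₁ // σ₁.Invariant N} → {N : Submodule R M // σ.Invariant N} :=
      fun N₁ => ⟨N₁.1.map f, hfmap_inv N₁.2⟩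
    let sb : {N : Submodule R M₂ // σ₂.Invariant N} → {N : Submodule R M // σ.Invariant N} :=
      fun N₂ => ⟨N₂.1.comap p, hpcomap_inv N₂.2⟩
    have hsa : StrictMono sa := by
      refine Monotone.strictMono_of_injective (fun a b hab => Submodule.map_mono hab)
        fun a b hab => Subtype.ext (Submodule.map_injective_of_injective hinj
          (congrArg Subtype.val hab))
    have hsb : StrictMono sb := by
      refine Monotone.strictMono_of_injective (fun a b hab => Submodule.comap_mono hab)
        fun a b hab => Subtype.ext (Submodule.comap_injective_of_surjective hsurj
          (congrArg Subtype.val hab))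
    have hca : ∀ a, sa a ≤ c := fun a => LinearMap.map_le_range
    have hcb : ∀ b, c ≤ sb b := by
      intro b
      show LinearMap.range f ≤ b.1.comap p
      rw [hexact]
      exact fun z hz => by
        have : p z = 0 := LinearMap.mem_ker.1 hz
        simp [Submodule.mem_comap, this]
    have hge : σ₁.length + σ₂.length ≤ σ.length :=
      aux_add_krullDim_le_of_sandwich c sa hsa hca sb hsb hcb
    exact le_antisymm hle hge
  -- the splitting
  have hproj : Module.Projective R M₂ := algebroid_module_projective hsimple σ₂
  obtain ⟨s, hs⟩ := Module.projective_lifting_property p LinearMap.id hsurj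
  have hps : ∀ y : M₂, p (s y) = y := fun y => congrArg (fun q => q y) hs
  have hmtop : ((maximalIdeal R) • ⊤ : Submodule R M) =
      ((maximalIdeal R) • ⊤ : Submodule R M₁).map f ⊔
        ((maximalIdeal R) • ⊤ : Submodule R M₂).map s := by
    have htop : (⊤ : Submodule R M) = LinearMap.range f ⊔ LinearMap.range s := by
      refine le_antisymm (fun x _ => ?_) le_top
      refine Submodule.mem_sup.2 ⟨x - s (p x), ?_, s (p x), ⟨p x, rfl⟩, by abel⟩
      rw [hexact, LinearMap.mem_ker]
      simp [hps]
    conv_lhs => rw [htop]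
    rw [Submodule.smul_sup, LinearMap.range_eq_map f, LinearMap.range_eq_map s,
      ← Submodule.map_smul'', ← Submodule.map_smul'']
  have hsplit : ∀ N₁ : Submodule R M₁, ((maximalIdeal R) • ⊤ : Submodule R M₁) ≤ N₁ →
      (N₁.map f ⊔ ((maximalIdeal R) • ⊤ : Submodule R M)).comap f = N₁ := by
    intro N₁ hN₁
    refine le_antisymm ?_ ((Submodule.le_comap_map f N₁).trans (Submodule.comap_mono le_sup_left))
    intro x hx
    rw [Submodule.mem_comap, hmtop, ← sup_assoc, ← Submodule.map_sup,
      sup_of_le_left hN₁] at hx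
    obtain ⟨y, hy, z, hz, hsum⟩ := Submodule.mem_sup.1 hx
    obtain ⟨n, hn, rfl⟩ := hy
    obtain ⟨μ₂, hμ₂, rfl⟩ := hz
    have e : p (f x) = 0 := hpf x
    rw [← hsum, map_add, hpf n, hps μ₂, zero_add] at e
    rw [e, map_zero, add_zero] at hsum
    have : x = n := hinj hsum.symm
    rwa [this]
  -- fibre invariance transfers
  have hmt_fib : ∀ x : g, L.anchor x = 0 →
      ∀ mm ∈ ((maximalIdeal R) • ⊤ : Submodule R M), σ.ρ x mm ∈
        ((maximalIdeal R) • ⊤ : Submodule R M) := ρ_closed_smul_top σ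
  have hmt_fib₁ : ∀ x : g, L.anchor x = 0 →
      ∀ mm ∈ ((maximalIdeal R) • ⊤ : Submodule R M₁), σ₁.ρ x mm ∈
        ((maximalIdeal R) • ⊤ : Submodule R M₁) := ρ_closed_smul_top σ₁
  have hmt_fib₂ : ∀ x : g, L.anchor x = 0 →
      ∀ mm ∈ ((maximalIdeal R) • ⊤ : Submodule R M₂), σ₂.ρ x mm ∈
        ((maximalIdeal R) • ⊤ : Submodule R M₂) := ρ_closed_smul_top σ₂
  have hmf : ((maximalIdeal R) • ⊤ : Submodule R M₁).map f ≤
      ((maximalIdeal R) • ⊤ : Submodule R M) := by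
    rw [Submodule.map_smul'']
    exact Submodule.smul_mono le_rfl le_top
  have hmp : ((maximalIdeal R) • ⊤ : Submodule R M).map p =
      ((maximalIdeal R) • ⊤ : Submodule R M₂) := by
    rw [Submodule.map_smul'', Submodule.map_top, LinearMap.range_eq_top.2 hsurj]
  -- Part B : additivity of fibre length
  have hb : σ.fibreLength = σ₁.fibreLength + σ₂.fibreLength := by
    set s0 : Set g := {x : g | L.anchor x = 0} with hs0
    let c : {N : Submodule R M // (maximalIdeal R) • (⊤ : Submodule R M) ≤ N ∧
        ∀ x : g, L.anchor x = 0 → ∀ mm ∈ N, σ.ρ x mm ∈ N} :=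
      ⟨LinearMap.range f ⊔ (maximalIdeal R) • ⊤, le_sup_right,
        ρ_closed_sup (s := s0) σ (fun x hx => hrf_inv x) (fun x hx => hmt_fib x hx)⟩
    let u : {N : Submodule R M // (maximalIdeal R) • (⊤ : Submodule R M) ≤ N ∧
          ∀ x : g, L.anchor x = 0 → ∀ mm ∈ N, σ.ρ x mm ∈ N} →
        {N : Submodule R M₁ // (maximalIdeal R) • (⊤ : Submodule R M₁) ≤ N ∧
          ∀ x : g, L.anchor x = 0 → ∀ mm ∈ N, σ₁.ρ x mm ∈ N} :=
      fun N => ⟨N.1.comap f,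
        (Submodule.map_le_iff_le_comap.1 (hmf.trans N.2.1)),
        ρ_closed_comap (s := s0) σ₁ σ f hf N.2.2⟩
    let v : {N : Submodule R M // (maximalIdeal R) • (⊤ : Submodule R M) ≤ N ∧
          ∀ x : g, L.anchor x = 0 → ∀ mm ∈ N, σ.ρ x mm ∈ N} →
        {N : Submodule R M₂ // (maximalIdeal R) • (⊤ : Submodule R M₂) ≤ N ∧
          ∀ x : g, L.anchor x = 0 → ∀ mm ∈ N, σ₂.ρ x mm ∈ N} :=
      fun N => ⟨N.1.map p, by rw [← hmp]; exact Submodule.map_mono N.2.1,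
        ρ_closed_map (s := s0) σ σ₂ p hp N.2.2⟩
    have hu : Monotone u := fun a b hab => Submodule.comap_mono hab
    have hv : Monotone v := fun a b hab => Submodule.map_mono hab
    have hj : ∀ x y, x < y → u x = u y → v x < v y := by
      intro x y hxy h1
      refine lt_of_le_of_ne (hv hxy.le) fun h2 => hxy.ne ?_
      exact Subtype.ext (hraw _ _ hxy.le (congrArg Subtype.val h1) (congrArg Subtype.val h2))
    have hle : σ.fibreLength ≤ σ₁.fibreLength + σ₂.fibreLength :=
      aux_krullDim_le_add_of_jointly_strict u hu v hv hj
    let sa : {N : Submodule R M₁ // (maximalIdeal R) • (⊤ : Submodule R M₁) ≤ N ∧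
          ∀ x : g, L.anchor x = 0 → ∀ mm ∈ N, σ₁.ρ x mm ∈ N} →
        {N : Submodule R M // (maximalIdeal R) • (⊤ : Submodule R M) ≤ N ∧
          ∀ x : g, L.anchor x = 0 → ∀ mm ∈ N, σ.ρ x mm ∈ N} :=
      fun N₁ => ⟨N₁.1.map f ⊔ (maximalIdeal R) • ⊤, le_sup_right,
        ρ_closed_sup (s := s0) σ
          (ρ_closed_map (s := s0) σ₁ σ f hf N₁.2.2) (fun x hx => hmt_fib x hx)⟩
    let sb : {N : Submodule R M₂ // (maximalIdeal R) • (⊤ : Submodule R M₂) ≤ N ∧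
          ∀ x : g, L.anchor x = 0 → ∀ mm ∈ N, σ₂.ρ x mm ∈ N} →
        {N : Submodule R M // (maximalIdeal R) • (⊤ : Submodule R M) ≤ N ∧
          ∀ x : g, L.anchor x = 0 → ∀ mm ∈ N, σ.ρ x mm ∈ N} :=
      fun N₂ => ⟨N₂.1.comap p, by rw [← Submodule.map_le_iff_le_comap, hmp]; exact N₂.2.1,
        ρ_closed_comap (s := s0) σ σ₂ p hp N₂.2.2⟩
    have hsa : StrictMono sa := by
      refine Monotone.strictMono_of_injective
        (fun a b hab => Subtype.coe_le_coe.1 (sup_le_sup_right (Submodule.map_mono hab) _ :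
          a.1.map f ⊔ (maximalIdeal R) • ⊤ ≤ b.1.map f ⊔ (maximalIdeal R) • ⊤)) ?_
      intro a b hab
      have h1 : a.1.map f ⊔ (maximalIdeal R) • ⊤ = b.1.map f ⊔ (maximalIdeal R) • ⊤ :=
        congrArg Subtype.val hab
      have h2 : a.1 = b.1 := by
        rw [← hsplit a.1 a.2.1, ← hsplit b.1 b.2.1, h1]
      exact Subtype.ext h2
    have hsb : StrictMono sb := by
      refine Monotone.strictMono_of_injective (fun a b hab => Submodule.comap_mono hab)
        fun a b hab => Subtype.ext (Submodule.comap_injective_of_surjective hsurj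
          (congrArg Subtype.val hab))
    have hca : ∀ a, sa a ≤ c := fun a =>
      Subtype.coe_le_coe.1 (sup_le_sup_right LinearMap.map_le_range _ :
        a.1.map f ⊔ (maximalIdeal R) • ⊤ ≤ LinearMap.range f ⊔ (maximalIdeal R) • ⊤)
    have hcb : ∀ b, c ≤ sb b := by
      intro b
      show LinearMap.range f ⊔ (maximalIdeal R) • ⊤ ≤ b.1.comap p
      refine sup_le ?_ (by rw [← Submodule.map_le_iff_le_comap, hmp]; exact b.2.1)
      rw [hexact]
      exact fun z hz => by
        have : p z = 0 := LinearMap.mem_ker.1 hz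
        simp [Submodule.mem_comap, this]
    have hge : σ₁.fibreLength + σ₂.fibreLength ≤ σ.fibreLength :=
      aux_add_krullDim_le_of_sandwich c sa hsa hca sb hsb hcb
    exact le_antisymm hle hge
  -- comparison of lengths aᵢ ≤ bᵢ
  have hab1 : σ₁.length ≤ σ₁.fibreLength := by
    let t : {N : Submodule R M₁ // σ₁.Invariant N} →
        {N : Submodule R M₁ // (maximalIdeal R) • (⊤ : Submodule R M₁) ≤ N ∧
          ∀ x : g, L.anchor x = 0 → ∀ mm ∈ N, σ₁.ρ x mm ∈ N} :=
      fun N => ⟨N.1 ⊔ (maximalIdeal R) • ⊤, le_sup_right,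
        ρ_closed_sup (s := {x : g | L.anchor x = 0}) σ₁
          (fun x _ => N.2 x) (fun x hx => ρ_closed_smul_top σ₁ x hx)⟩
    have ht : StrictMono t := by
      intro a b hab
      have hab' : a.1 ≤ b.1 := Subtype.coe_le_coe.2 hab.le
      refine lt_of_le_of_ne (Subtype.mk_le_mk.2 (sup_le_sup_right hab' _)) fun hc => ?_
      have hcc : a.1 ⊔ (maximalIdeal R) • ⊤ = b.1 ⊔ (maximalIdeal R) • ⊤ :=
        congrArg Subtype.val hc
      have h1 : b.1 ≤ a.1 ⊔ (maximalIdeal R) • ⊤ := by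
        rw [hcc]; exact le_sup_left
      have h2 : b.1 ≤ a.1 := invariant_le_of_le_sup hsimple σ₁ hab' b.2 h1
      exact hab.ne (Subtype.ext (le_antisymm hab' h2))
    exact Order.krullDim_le_of_strictMono t ht
  have hab2 : σ₂.length ≤ σ₂.fibreLength := by
    let t : {N : Submodule R M₂ // σ₂.Invariant N} →
        {N : Submodule R M₂ // (maximalIdeal R) • (⊤ : Submodule R M₂) ≤ N ∧
          ∀ x : g, L.anchor x = 0 → ∀ mm ∈ N, σ₂.ρ x mm ∈ N} :=
      fun N => ⟨N.1 ⊔ (maximalIdeal R) • ⊤, le_sup_right,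
        ρ_closed_sup (s := {x : g | L.anchor x = 0}) σ₂
          (fun x _ => N.2 x) (fun x hx => ρ_closed_smul_top σ₂ x hx)⟩
    have ht : StrictMono t := by
      intro a b hab
      have hab' : a.1 ≤ b.1 := Subtype.coe_le_coe.2 hab.le
      refine lt_of_le_of_ne (Subtype.mk_le_mk.2 (sup_le_sup_right hab' _)) fun hc => ?_
      have hcc : a.1 ⊔ (maximalIdeal R) • ⊤ = b.1 ⊔ (maximalIdeal R) • ⊤ :=
        congrArg Subtype.val hc
      have h1 : b.1 ≤ a.1 ⊔ (maximalIdeal R) • ⊤ := by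
        rw [hcc]; exact le_sup_left
      have h2 : b.1 ≤ a.1 := invariant_le_of_le_sup hsimple σ₂ hab' b.2 h1
      exact hab.ne (Subtype.ext (le_antisymm hab' h2))
    exact Order.krullDim_le_of_strictMono t ht
  -- non-degeneracy
  have hne1 : σ₁.length ≠ ⊥ := by
    have : Nonempty {N : Submodule R M₁ // σ₁.Invariant N} := ⟨⟨⊥, σ₁.invariant_bot⟩⟩
    have h0 := Order.krullDim_nonneg (α := {N : Submodule R M₁ // σ₁.Invariant N})
    intro hc
    rw [AlgebroidModule.length] at hc
    rw [hc] at h0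
    simp at h0
  have hne2 : σ₂.length ≠ ⊥ := by
    have : Nonempty {N : Submodule R M₂ // σ₂.Invariant N} := ⟨⟨⊥, σ₂.invariant_bot⟩⟩
    have h0 := Order.krullDim_nonneg (α := {N : Submodule R M₂ // σ₂.Invariant N})
    intro hc
    rw [AlgebroidModule.length] at hc
    rw [hc] at h0
    simp at h0
  have hfin1 : σ₁.fibreLength ≠ ⊤ := fibreLength_ne_top σ₁
  have hfin2 : σ₂.fibreLength ≠ ⊤ := fibreLength_ne_top σ₂
  -- conclusion
  constructor
  · intro h
    have key : σ₁.length + σ₂.length = σ₁.fibreLength + σ₂.fibreLength := by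
      rw [← ha, ← hb]; exact h
    obtain ⟨e1, e2⟩ := aux_cancel key hab1 hab2 hne1 hne2 hfin1 hfin2
    exact ⟨e1, e2⟩
  · rintro ⟨h1, h2⟩
    show σ.length = σ.fibreLength
    rw [ha, hb, h1, h2]
end

section
/- Let g_A be a Lie algebroid over a local noetherian k-algebra A and M a g_A-module of finite type over A. Then: (1) if I is a defining ideal for the g_A-module A, then I is a defining ideal for M; (2) if I is a defining ideal for M, then ℓ_{g_A}(M/I^{n+1}M) < ∞ for every integer n ≥ 0. -/
open IsLocalRing

universe u v w

namespace LieAlgebroid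

variable {k : Type u} {A : Type v} {g : Type w} [CommRing k] [CommRing A]
    [Algebra k A] [LieRing g] [LieAlgebra k g] [Module A g] [IsScalarTower k A g]
variable {L : LieAlgebroid k A g} {M : Type*} [AddCommGroup M] [Module A M]

/-- `I` is an ideal of definition relative to the `g_A`-module `M`: a proper invariant ideal
with `ℓ_{g_A}(M/IM) < ∞` (computed via the lattice of invariant submodules containing `IM`). -/
def AlgebroidModule.IsDefiningIdeal (σ : AlgebroidModule L M) (I : Ideal A) : Prop :=
  I ≠ ⊤ ∧ L.InvariantIdeal I ∧
    Order.krullDim {N : Submodule A M // I • (⊤ : Submodule A M) ≤ N ∧ σ.Invariant N} < ⊤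

/-- `I` is an ideal of definition relative to the `g_A`-module `A`. -/
def IsDefiningIdeal (L : LieAlgebroid k A g) (I : Ideal A) : Prop :=
  I ≠ ⊤ ∧ L.InvariantIdeal I ∧
    Order.krullDim {J : Ideal A // I ≤ J ∧ L.InvariantIdeal J} < ⊤

end LieAlgebroid

open LieAlgebroid


/-- Every strictly increasing chain through elements satisfying `P` has length at most `B`. -/
def ChainBd {α : Type*} [Preorder α] (P : α → Prop) (B : ℕ) : Prop :=
  ∀ (t : ℕ) (c : Fin (t + 1) → α), StrictMono c → (∀ i, P (c i)) → t ≤ B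

lemma ChainBd.mono {α : Type*} [Preorder α] {P Q : α → Prop} {B : ℕ}
    (h : ChainBd P B) (imp : ∀ x, Q x → P x) : ChainBd Q B :=
  fun t c hc hQ => h t c hc fun i => imp _ (hQ i)

lemma chainBd_of_krullDim_lt_top {α : Type*} [Preorder α] {P : α → Prop}
    (h : Order.krullDim {x : α // P x} < ⊤) : ∃ B : ℕ, ChainBd P B := by
  have hne : Order.krullDim {x : α // P x} ≠ ⊤ := h.ne
  have key : ∃ B : ℕ, ∀ t : ℕ, ((t : ℕ∞) : WithBot ℕ∞) ≤ Order.krullDim {x : α // P x} →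
      t ≤ B := by
    rcases hd : Order.krullDim {x : α // P x} with _ | e
    · exact ⟨0, fun t ht => absurd ht (WithBot.not_coe_le_bot _)⟩
    · have he : e ≠ ⊤ := by rintro rfl; exact hne (by rw [hd]; rfl)
      lift e to ℕ using he
      refine ⟨e, fun t ht => ?_⟩
      exact Nat.cast_le.mp (WithBot.coe_le_coe.mp ht)
  obtain ⟨B, hB⟩ := key
  refine ⟨B, fun t c hc hP => ?_⟩
  have hmono : StrictMono (fun i => (⟨c i, hP i⟩ : {x : α // P x})) := fun i j hij =>
    Subtype.mk_lt_mk.2 (hc hij)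
  exact hB t (Order.LTSeries.length_le_krullDim
    (LTSeries.mk t (fun i => (⟨c i, hP i⟩ : {x : α // P x})) hmono))

lemma krullDim_lt_top_of_chainBd {α : Type*} [Preorder α] {P : α → Prop} {B : ℕ}
    (h : ChainBd P B) : Order.krullDim {x : α // P x} < ⊤ := by
  have hb : ∀ p : LTSeries {x : α // P x}, p.length ≤ B := by
    intro p
    refine h p.length (fun i => (p i : α)) ?_ (fun i => (p i).2)
    intro i j hij
    exact Subtype.coe_lt_coe.2 (p.strictMono hij)
  have hle : Order.krullDim {x : α // P x} ≤ ((B : ℕ∞) : WithBot ℕ∞) := by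
    rw [Order.krullDim]
    exact iSup_le fun p => by exact_mod_cast hb p
  exact lt_of_le_of_lt hle (WithBot.coe_lt_coe.mpr (ENat.coe_lt_top B))

lemma ChainBd.antitone_stab {α : Type*} [PartialOrder α] {P : α → Prop} {B : ℕ}
    (h : ChainBd P B) (C : ℕ → α) (hC : ∀ i, C (i + 1) ≤ C i) (hP : ∀ i, P (C i)) :
    ∃ i, C (i + 1) = C i := by
  by_contra hcon
  push_neg at hcon
  have hanti : StrictAnti C := strictAnti_nat_of_succ_lt fun n => lt_of_le_of_ne (hC n) (hcon n)
  have hsm : StrictMono (fun j : Fin (B + 1 + 1) => C (B + 1 - (j : ℕ))) := by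
    intro a b hab
    have ha := a.isLt
    have hb := b.isLt
    rw [Fin.lt_def] at hab
    exact hanti (by omega)
  have := h (B + 1) _ hsm (fun j => hP _)
  omega


/-- Bound on the number of strict steps of a monotone function through `P`. -/
lemma card_steps_le {β : Type*} [Preorder β] {t : ℕ}
    (f : Fin (t + 1) → β) (hf : Monotone f) (S : Finset (Fin t))
    (hS : ∀ i ∈ S, f i.castSucc < f i.succ) {P : β → Prop} (hP : ∀ i, P (f i)) {B : ℕ}
    (hB : ChainBd P B) : S.card ≤ B := by
  classical
  obtain hk : S.card = S.card := rfl
  set e := S.orderIsoOfFin hk with he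
  set c : Fin (S.card + 1) → β := fun j =>
    if h : (j : ℕ) < S.card then f ((e ⟨(j : ℕ), h⟩ : S) : Fin t).castSucc
    else f (Fin.last t) with hc
  have hval : ∀ j, ∃ i, c j = f i := by
    intro j
    by_cases h : (j : ℕ) < S.card
    · exact ⟨((e ⟨(j : ℕ), h⟩ : S) : Fin t).castSucc, by simp only [hc, dif_pos h]⟩
    · exact ⟨Fin.last t, by simp only [hc, dif_neg h]⟩
  have hsm : StrictMono c := by
    refine Fin.strictMono_iff_lt_succ.mpr ?_
    intro j
    have h : ((j.castSucc : Fin (S.card + 1)) : ℕ) < S.card := j.isLt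
    have h1 : c j.castSucc = f ((e ⟨(j : ℕ), j.isLt⟩ : S) : Fin t).castSucc := by
      simp only [hc, Fin.coe_castSucc, dif_pos h]
    have hlt1 : c j.castSucc < f (((e ⟨(j : ℕ), j.isLt⟩ : S) : Fin t)).succ := by
      rw [h1]; exact hS _ (e ⟨(j : ℕ), j.isLt⟩).2
    refine hlt1.trans_le ?_
    by_cases h2 : ((j.succ : Fin (S.card + 1)) : ℕ) < S.card
    · have h3 : c j.succ = f ((e ⟨((j.succ : Fin (S.card + 1)) : ℕ), h2⟩ : S) : Fin t).castSucc := by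
        simp only [hc, dif_pos h2]
      rw [h3]
      apply hf
      have hfin : (⟨(j : ℕ), j.isLt⟩ : Fin S.card) <
          ⟨((j.succ : Fin (S.card + 1)) : ℕ), h2⟩ := by
        rw [Fin.mk_lt_mk, Fin.val_succ]; omega
      have hlt : ((e ⟨(j : ℕ), j.isLt⟩ : S) : Fin t) <
          ((e ⟨((j.succ : Fin (S.card + 1)) : ℕ), h2⟩ : S) : Fin t) :=
        Subtype.coe_lt_coe.2 (e.strictMono hfin)
      exact Fin.succ_le_castSucc_iff.mpr hlt
    · have h3 : c j.succ = f (Fin.last t) := by simp only [hc, dif_neg h2]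
      rw [h3]
      apply hf
      rw [Fin.le_def]
      have := (((e ⟨(j : ℕ), j.isLt⟩ : S)) : Fin t).isLt
      simp only [Fin.val_succ, Fin.val_last]
      omega
  exact hB S.card c hsm (fun j => by obtain ⟨i, hi⟩ := hval j; rw [hi]; exact hP i)

/-- Splitting chains along an element of a modular lattice. -/
lemma ChainBd.split {α : Type*} [Lattice α] [IsModularLattice α] (X : α)
    {P Q R : α → Prop} {B₁ B₂ : ℕ}
    (hQb : ChainBd Q B₁) (hRb : ChainBd R B₂)
    (hsup : ∀ N, P N → Q (N ⊔ X)) (hinf : ∀ N, P N → R (N ⊓ X)) :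
    ChainBd P (B₁ + B₂) := by
  intro t c hc hP
  classical
  have hcover : ∀ i : Fin t,
      (c i.castSucc ⊔ X) < (c i.succ ⊔ X) ∨ (c i.castSucc ⊓ X) < (c i.succ ⊓ X) := by
    intro i
    by_contra hcon
    push_neg at hcon
    have hle : c i.castSucc ≤ c i.succ := (hc (Fin.castSucc_lt_succ (i := i))).le
    have e1 : (c i.castSucc ⊔ X) = (c i.succ ⊔ X) := by
      rcases eq_or_lt_of_le (sup_le_sup_right hle X) with h | h
      · exact h
      · exact absurd h hcon.1
    have e2 : (c i.castSucc ⊓ X) = (c i.succ ⊓ X) := by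
      rcases eq_or_lt_of_le (inf_le_inf_right X hle) with h | h
      · exact h
      · exact absurd h hcon.2
    exact (hc (Fin.castSucc_lt_succ (i := i))).ne (eq_of_le_of_inf_le_of_sup_le hle e2.ge e1.ge)
  set S₁ : Finset (Fin t) := Finset.univ.filter
    (fun i => (c i.castSucc ⊔ X) < (c i.succ ⊔ X)) with hS₁
  set S₂ : Finset (Fin t) := Finset.univ.filter
    (fun i => (c i.castSucc ⊓ X) < (c i.succ ⊓ X)) with hS₂
  have hsub : (Finset.univ : Finset (Fin t)) ⊆ S₁ ∪ S₂ := by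
    intro i _
    rcases hcover i with h | h
    · exact Finset.mem_union_left _ (Finset.mem_filter.mpr ⟨Finset.mem_univ i, h⟩)
    · exact Finset.mem_union_right _ (Finset.mem_filter.mpr ⟨Finset.mem_univ i, h⟩)
  have hcard : t ≤ S₁.card + S₂.card := by
    calc t = (Finset.univ : Finset (Fin t)).card := by simp
    _ ≤ (S₁ ∪ S₂).card := Finset.card_le_card hsub
    _ ≤ S₁.card + S₂.card := Finset.card_union_le _ _
  have hc1 : S₁.card ≤ B₁ := by
    refine card_steps_le (fun i => c i ⊔ X) (fun a b hab => sup_le_sup_right (hc.monotone hab) X)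
      S₁ (fun i hi => ?_) (fun i => hsup _ (hP i)) hQb
    exact (Finset.mem_filter.mp hi).2
  have hc2 : S₂.card ≤ B₂ := by
    refine card_steps_le (fun i => c i ⊓ X) (fun a b hab => inf_le_inf_right X (hc.monotone hab))
      S₂ (fun i hi => ?_) (fun i => hinf _ (hP i)) hRb
    exact (Finset.mem_filter.mp hi).2
  omega
lemma natUnit {k A : Type*} [Field k] [CharZero k] [CommRing A] [Algebra k A]
    (n : ℕ) (hn : 0 < n) : IsUnit (n : A) := by
  have h1 : ((n : k)) ≠ 0 := Nat.cast_ne_zero.mpr hn.ne'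
  have hu : IsUnit ((n : k)) := isUnit_iff_ne_zero.mpr h1
  have h2 := hu.map (algebraMap k A)
  rwa [map_natCast] at h2

section AuxAlgebra

set_option linter.unusedSectionVars false

open LieAlgebroid

variable {k : Type u} {A : Type v} {g : Type w}
variable [Field k] [CharZero k] [CommRing A] [IsLocalRing A] [IsNoetherianRing A] [Algebra k A]
variable [LieRing g] [LieAlgebra k g] [Module A g] [IsScalarTower k A g]
variable {L : LieAlgebroid k A g}
variable {M : Type v} [AddCommGroup M] [Module A M] [Module.Finite A M]
variable {σ : AlgebroidModule L M}

/-! ### Invariance toolbox -/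

lemma alg_inv_top : σ.Invariant (⊤ : Submodule A M) := fun _ _ _ => trivial

lemma alg_inv_sup {N P : Submodule A M} (hN : σ.Invariant N) (hP : σ.Invariant P) :
    σ.Invariant (N ⊔ P) := by
  intro x m hm
  rw [Submodule.mem_sup] at hm
  obtain ⟨n, hn, p, hp, rfl⟩ := hm
  rw [σ.ρ_add]
  exact Submodule.add_mem_sup (hN x n hn) (hP x p hp)

lemma alg_inv_inf {N P : Submodule A M} (hN : σ.Invariant N) (hP : σ.Invariant P) :
    σ.Invariant (N ⊓ P) := fun x m hm => ⟨hN x m hm.1, hP x m hm.2⟩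

lemma alg_inv_smul {q : Ideal A} {N : Submodule A M} (hq : L.InvariantIdeal q)
    (hN : σ.Invariant N) : σ.Invariant (q • N) := by
  intro x m hm
  refine Submodule.smul_induction_on hm ?_ ?_
  · intro r hr n hn
    rw [σ.ρ_leibniz]
    exact Submodule.add_mem _ (Submodule.smul_mem_smul (hq x r hr) hn)
      (Submodule.smul_mem_smul hr (hN x n hn))
  · intro m₁ m₂ h1 h2
    rw [σ.ρ_add]
    exact Submodule.add_mem _ h1 h2

lemma smul_top_succ (q : Ideal A) (e : ℕ) :
    (q ^ (e + 1) : Ideal A) • (⊤ : Submodule A M) =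
      q • ((q ^ e : Ideal A) • (⊤ : Submodule A M)) := by
  rw [pow_succ', ← Ideal.smul_eq_mul, Submodule.smul_assoc]

lemma invId_top : L.InvariantIdeal (⊤ : Ideal A) := fun _ _ _ => trivial

lemma invId_sup {q r : Ideal A} (hq : L.InvariantIdeal q) (hr : L.InvariantIdeal r) :
    L.InvariantIdeal (q ⊔ r) := by
  intro x a ha
  rw [Submodule.mem_sup] at ha
  obtain ⟨b, hb, c, hc, rfl⟩ := ha
  rw [map_add]
  exact Submodule.add_mem_sup (hq x b hb) (hr x c hc)

lemma invId_mul {q r : Ideal A} (hq : L.InvariantIdeal q) (hr : L.InvariantIdeal r) :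
    L.InvariantIdeal (q * r) := by
  intro x a ha
  refine Submodule.mul_induction_on ha ?_ ?_
  · intro b hb c hc
    have : L.anchor x (b * c) = b * L.anchor x c + c * L.anchor x b := by
      rw [Derivation.leibniz]; simp only [smul_eq_mul]
    rw [this]
    refine Submodule.add_mem _ (Ideal.mul_mem_mul hb (hr x c hc)) ?_
    rw [mul_comm c (L.anchor x b)]
    exact Ideal.mul_mem_mul (hq x b hb) hc
  · intro b c h1 h2
    rw [map_add]
    exact Submodule.add_mem _ h1 h2

lemma invId_pow {q : Ideal A} (hq : L.InvariantIdeal q) (e : ℕ) :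
    L.InvariantIdeal (q ^ e) := by
  induction e with
  | zero => simpa [pow_zero, Ideal.one_eq_top] using (invId_top (L := L))
  | succ e ih => rw [pow_succ]; exact invId_mul ih hq

lemma invId_colon_mod {N P : Submodule A M} (hN : σ.Invariant N) (hP : σ.Invariant P) :
    L.InvariantIdeal (N.colon P) := by
  intro x a ha
  rw [Submodule.mem_colon] at ha ⊢
  intro m hm
  have h1 : L.anchor x a • m = σ.ρ x (a • m) - a • σ.ρ x m :=
    eq_sub_of_add_eq (σ.ρ_leibniz x a m).symm
  rw [h1]
  exact Submodule.sub_mem _ (hN x _ (ha m hm)) (ha _ (hP x m hm))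

lemma invId_colon_ideal {p q : Ideal A} (hp : L.InvariantIdeal p) (hq : L.InvariantIdeal q) :
    L.InvariantIdeal (Submodule.colon (p : Submodule A A) (q : Submodule A A)) := by
  intro x a ha
  rw [Submodule.mem_colon] at ha ⊢
  intro y hy
  have h1 : L.anchor x a • y = L.anchor x (a * y) - a • L.anchor x y := by
    rw [Derivation.leibniz]; simp only [smul_eq_mul]; ring
  rw [h1]
  refine Submodule.sub_mem _ (hp x _ ?_) (ha _ (hq x y hy))
  have := ha y hy
  simpa only [smul_eq_mul] using this

/-! ### Radical invariance in characteristic zero -/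

lemma unit_cancel {u y : A} (hu : IsUnit u) {q : Ideal A} (h : u * y ∈ q) : y ∈ q := by
  obtain ⟨v, rfl⟩ := hu
  have h2 := q.mul_mem_left (↑v⁻¹) h
  rwa [← mul_assoc, Units.inv_mul, one_mul] at h2

lemma invId_radical {q : Ideal A} (hq : L.InvariantIdeal q) :
    L.InvariantIdeal q.radical := by
  intro x a ha
  rw [Ideal.mem_radical_iff] at ha ⊢
  obtain ⟨n, hn⟩ := ha
  rcases Nat.eq_zero_or_pos n with rfl | hnpos
  · rw [pow_zero] at hn
    exact ⟨1, by simpa using Ideal.mul_mem_left q _ hn⟩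
  set B := L.anchor x a with hB
  have main : ∀ j : ℕ, j + 1 ≤ n → a ^ (n - 1 - j) * B ^ (2 * j + 1) ∈ q := by
    intro j
    induction j with
    | zero =>
      intro _
      have h1 : L.anchor x (a ^ n) ∈ q := hq x _ hn
      rw [Derivation.leibniz_pow] at h1
      rw [nsmul_eq_mul, smul_eq_mul] at h1
      have h2 := unit_cancel (natUnit (k := k) n hnpos) h1
      simpa using h2
    | succ j ih =>
      intro hj
      have hIH := ih (by omega)
      set m' := n - 2 - j with hm'
      have hmeq : n - 1 - j = m' + 1 := by omega
      rw [hmeq] at hIH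
      set D2 := L.anchor x B with hD2
      have h1 : L.anchor x (a ^ (m' + 1) * B ^ (2 * j + 1)) ∈ q := hq x _ hIH
      have h2 : L.anchor x (a ^ (m' + 1) * B ^ (2 * j + 1)) =
          a ^ (m' + 1) • L.anchor x (B ^ (2 * j + 1)) +
            B ^ (2 * j + 1) • L.anchor x (a ^ (m' + 1)) := Derivation.leibniz _ _ _
      have h3 : L.anchor x (B ^ (2 * j + 1)) = (2 * j + 1) • B ^ (2 * j) • D2 := by
        rw [Derivation.leibniz_pow, ← hD2]
        norm_num
      have h4 : L.anchor x (a ^ (m' + 1)) = (m' + 1) • a ^ m' • B := by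
        rw [Derivation.leibniz_pow, ← hB]
        norm_num
      have key : ((m' + 1 : ℕ) : A) * (a ^ m' * B ^ (2 * j + 3)) =
          B * L.anchor x (a ^ (m' + 1) * B ^ (2 * j + 1)) -
            ((2 * j + 1 : ℕ) : A) * (D2 * (a ^ (m' + 1) * B ^ (2 * j + 1))) := by
        rw [h2, h3, h4]
        simp only [nsmul_eq_mul, smul_eq_mul]
        push_cast
        ring
      have hmem : B * L.anchor x (a ^ (m' + 1) * B ^ (2 * j + 1)) -
          ((2 * j + 1 : ℕ) : A) * (D2 * (a ^ (m' + 1) * B ^ (2 * j + 1))) ∈ q :=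
        Submodule.sub_mem _ (q.mul_mem_left _ h1)
          (q.mul_mem_left _ (q.mul_mem_left _ hIH))
      have h5 : ((m' + 1 : ℕ) : A) * (a ^ m' * B ^ (2 * j + 3)) ∈ q := key ▸ hmem
      have h6 := unit_cancel (natUnit (k := k) (m' + 1) (Nat.succ_pos _)) h5
      have he1 : n - 1 - (j + 1) = m' := by omega
      have he2 : 2 * (j + 1) + 1 = 2 * j + 3 := by omega
      rw [he1, he2]
      exact h6
  have hfin := main (n - 1) (by omega)
  refine ⟨2 * (n - 1) + 1, ?_⟩
  have : n - 1 - (n - 1) = 0 := by omega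
  rw [this, pow_zero, one_mul] at hfin
  exact hfin


/-! ### Differential closure of an element, Ritt's lemma, and primality -/

/-- Elements obtained from `b` by repeatedly applying anchor derivations. -/
inductive DerClosure (L : LieAlgebroid k A g) (b : A) : A → Prop
  | base : DerClosure L b b
  | step (x : g) (c : A) : DerClosure L b c → DerClosure L b (L.anchor x c)

/-- The smallest invariant ideal containing `b`. -/
def gIdeal (L : LieAlgebroid k A g) (b : A) : Ideal A :=
  Ideal.span {c | DerClosure L b c}

lemma gIdeal_invariant (b : A) : L.InvariantIdeal (gIdeal L b) := by
  intro x a ha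
  induction ha using Submodule.span_induction with
  | mem c hc => exact Ideal.subset_span (DerClosure.step x c hc)
  | zero => rw [map_zero]; exact Submodule.zero_mem _
  | add y z hy hz hy' hz' => rw [map_add]; exact Submodule.add_mem _ hy' hz'
  | smul r y hy hy' =>
      have h1 : L.anchor x (r • y) = r • L.anchor x y + y • L.anchor x r := by
        rw [smul_eq_mul, Derivation.leibniz]
      rw [h1]
      refine Submodule.add_mem _ (Submodule.smul_mem _ _ hy') ?_
      rw [smul_eq_mul, mul_comm]
      exact Ideal.mul_mem_left _ _ hy

lemma self_mem_gIdeal (b : A) : b ∈ gIdeal L b :=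
  Ideal.subset_span DerClosure.base

/-- A radical invariant ideal that contains all proper invariant ideals is prime. -/
lemma prime_of_invariant_max {p : Ideal A} (hrad : p.radical = p) (hinv : L.InvariantIdeal p)
    (hp : p ≠ ⊤) (hmax : ∀ q : Ideal A, L.InvariantIdeal q → q ≠ ⊤ → q ≤ p) : p.IsPrime := by
  rw [Ideal.isPrime_iff]
  refine ⟨hp, fun {a b} hab => ?_⟩
  by_cases hb : b ∈ p
  · exact Or.inr hb
  left
  have key : ∀ c, DerClosure L b c → a * c ∈ p := by
    intro c hc
    induction hc with
    | base => exact hab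
    | step x c hc ih =>
      have h1 : L.anchor x (a * c) ∈ p := hinv x _ ih
      have h2 : L.anchor x (a * c) = a * L.anchor x c + c * L.anchor x a := by
        rw [Derivation.leibniz]; simp only [smul_eq_mul]
      have key2 : (a * L.anchor x c) ^ 2 =
          (L.anchor x (a * c)) * (a * L.anchor x c) -
            (a * c) * (L.anchor x a * L.anchor x c) := by
        rw [h2]; ring
      have h4 : (a * L.anchor x c) ^ 2 ∈ p := by
        rw [key2]
        exact Submodule.sub_mem _ (p.mul_mem_right _ h1) (p.mul_mem_right _ ih)
      have h5 : a * L.anchor x c ∈ p.radical := Ideal.mem_radical_iff.mpr ⟨2, h4⟩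
      rwa [hrad] at h5
  have hq : L.InvariantIdeal (Submodule.colon (p : Submodule A A) (gIdeal L b)) :=
    invId_colon_ideal hinv (gIdeal_invariant b)
  have hqt : Submodule.colon (p : Submodule A A) (gIdeal L b) ≠ ⊤ := by
    intro h
    have h1 : (1 : A) ∈ Submodule.colon (p : Submodule A A) (gIdeal L b) := by
      rw [h]; trivial
    rw [Submodule.mem_colon] at h1
    have h2 := h1 b (self_mem_gIdeal b)
    rw [one_smul] at h2
    exact hb h2
  have ha : a ∈ Submodule.colon (p : Submodule A A) (gIdeal L b) := by
    rw [Submodule.mem_colon]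
    intro y hy
    rw [smul_eq_mul]
    induction hy using Submodule.span_induction with
    | mem c hc => exact key c hc
    | zero => rw [mul_zero]; exact Submodule.zero_mem _
    | add y z hy hz hy' hz' => rw [mul_add]; exact Submodule.add_mem _ hy' hz'
    | smul r y hy hy' =>
        rw [smul_eq_mul, ← mul_assoc, mul_comm a r, mul_assoc]
        exact Ideal.mul_mem_left _ _ hy'
  exact hmax _ hq hqt ha

/-! ### Nakayama-type consequences of chain boundedness -/

lemma mega_ideal {I : Ideal A} (hI : L.InvariantIdeal I) {B : ℕ}
    (hH : ChainBd (fun J : Ideal A => I ≤ J ∧ L.InvariantIdeal J) B)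
    (q : Ideal A) (hq : L.InvariantIdeal q) (hqt : q ≠ ⊤) : q ≤ I.radical := by
  have hstab := hH.antitone_stab (fun i => q ^ i ⊔ I)
    (fun i => sup_le_sup_right (Ideal.pow_le_pow_right (by omega)) I)
    (fun i => ⟨le_sup_right, invId_sup (invId_pow hq i) hI⟩)
  obtain ⟨i, hi⟩ := hstab
  -- q ^ i ≤ q ^ (i + 1) ⊔ I
  have hle : (q ^ i : Ideal A) ≤ q ^ (i + 1) ⊔ I := by
    calc (q ^ i : Ideal A) ≤ q ^ i ⊔ I := le_sup_left
    _ = q ^ (i + 1) ⊔ I := hi.symm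
  -- Nakayama on the image in A ⧸ I
  set W : Submodule A (A ⧸ (I : Submodule A A)) :=
    Submodule.map (I : Submodule A A).mkQ (q ^ i : Submodule A A) with hW
  have hWsmul : W ≤ q • W := by
    rw [hW, ← Submodule.map_smul'']
    intro w hw
    obtain ⟨y, hy, rfl⟩ := hw
    have := hle hy
    rw [Submodule.mem_sup] at this
    obtain ⟨u, hu, v, hv, huv⟩ := this
    refine ⟨u, ?_, ?_⟩
    · have : (q • q ^ i : Ideal A) = q ^ (i + 1) := by
        rw [Ideal.smul_eq_mul, ← pow_succ']
      rw [this]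
      exact hu
    · have hyv : (I : Submodule A A).mkQ y = (I : Submodule A A).mkQ u := by
        have : y - u = v := by rw [← huv]; ring
        have hvI : y - u ∈ (I : Submodule A A) := this ▸ hv
        rw [← sub_eq_zero, ← map_sub]
        exact (Submodule.Quotient.mk_eq_zero _).mpr hvI
      exact hyv.symm
  have hWfg : W.FG := IsNoetherian.noetherian W
  have hqjac : q ≤ (⊥ : Ideal A).jacobson := by
    rw [IsLocalRing.jacobson_eq_maximalIdeal (⊥ : Ideal A) bot_ne_top]
    exact IsLocalRing.le_maximalIdeal hqt
  have hWbot : W = ⊥ := Submodule.eq_bot_of_le_smul_of_le_jacobson_bot q W hWfg hWsmul hqjac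
  -- conclude q ^ i ≤ I
  have hqI : (q ^ i : Ideal A) ≤ I := by
    intro y hy
    have : (I : Submodule A A).mkQ y ∈ W := ⟨y, hy, rfl⟩
    rw [hWbot] at this
    have h0 : (I : Submodule A A).mkQ y = 0 := this
    exact (Submodule.Quotient.mk_eq_zero _).mp h0
  intro y hy
  exact Ideal.mem_radical_iff.mpr ⟨i, hqI (Ideal.pow_mem_pow hy i)⟩

lemma mega_module {I : Ideal A} (hI : L.InvariantIdeal I) {B : ℕ}
    (hH : ChainBd (fun N : Submodule A M => I • (⊤ : Submodule A M) ≤ N ∧ σ.Invariant N) B)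
    (q : Ideal A) (hq : L.InvariantIdeal q) (hqt : q ≠ ⊤) :
    q ≤ ((I • (⊤ : Submodule A M)).colon ⊤).radical := by
  have hstab := hH.antitone_stab
    (fun i => (q ^ i : Ideal A) • (⊤ : Submodule A M) ⊔ I • (⊤ : Submodule A M))
    (fun i => sup_le_sup_right
      (Submodule.smul_mono_left (Ideal.pow_le_pow_right (by omega))) _)
    (fun i => ⟨le_sup_right, alg_inv_sup (alg_inv_smul (invId_pow hq i) alg_inv_top)
      (alg_inv_smul hI alg_inv_top)⟩)
  obtain ⟨i, hi⟩ := hstab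
  have hle : (q ^ i : Ideal A) • (⊤ : Submodule A M) ≤
      (q ^ (i + 1) : Ideal A) • (⊤ : Submodule A M) ⊔ I • (⊤ : Submodule A M) := by
    calc (q ^ i : Ideal A) • (⊤ : Submodule A M) ≤ _ := le_sup_left
    _ = _ := hi.symm
  set W : Submodule A (M ⧸ (I • (⊤ : Submodule A M))) :=
    Submodule.map (I • (⊤ : Submodule A M)).mkQ ((q ^ i : Ideal A) • ⊤) with hW
  have hWsmul : W ≤ q • W := by
    rw [hW, ← Submodule.map_smul'']
    intro w hw
    obtain ⟨y, hy, rfl⟩ := hw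
    have h1 := hle hy
    rw [Submodule.mem_sup] at h1
    obtain ⟨u, hu, v, hv, huv⟩ := h1
    refine ⟨u, ?_, ?_⟩
    · have h2 : (q • ((q ^ i : Ideal A) • (⊤ : Submodule A M))) =
          (q ^ (i + 1) : Ideal A) • (⊤ : Submodule A M) := (smul_top_succ q i).symm
      rw [h2]
      exact hu
    · have hd : y - u = v := by rw [← huv]; abel
      have hvI : y - u ∈ I • (⊤ : Submodule A M) := hd ▸ hv
      have hyv : (I • (⊤ : Submodule A M)).mkQ y = (I • (⊤ : Submodule A M)).mkQ u := by
        rw [← sub_eq_zero, ← map_sub]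
        exact (Submodule.Quotient.mk_eq_zero _).mpr hvI
      exact hyv.symm
  have hWfg : W.FG := IsNoetherian.noetherian W
  have hqjac : q ≤ (⊥ : Ideal A).jacobson := by
    rw [IsLocalRing.jacobson_eq_maximalIdeal (⊥ : Ideal A) bot_ne_top]
    exact IsLocalRing.le_maximalIdeal hqt
  have hWbot : W = ⊥ := Submodule.eq_bot_of_le_smul_of_le_jacobson_bot q W hWfg hWsmul hqjac
  have hqI : (q ^ i : Ideal A) • (⊤ : Submodule A M) ≤ I • (⊤ : Submodule A M) := by
    intro y hy
    have hmem : (I • (⊤ : Submodule A M)).mkQ y ∈ W := ⟨y, hy, rfl⟩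
    rw [hWbot] at hmem
    exact (Submodule.Quotient.mk_eq_zero _).mp hmem
  intro y hy
  refine Ideal.mem_radical_iff.mpr ⟨i, ?_⟩
  rw [Submodule.mem_colon]
  intro m _
  exact hqI (Submodule.smul_mem_smul (Ideal.pow_mem_pow hy i) trivial)


/-! ### Saturation and the layer bound -/

/-- The `p`-saturation of `N` inside `Q`. -/
def psat (p : Ideal A) (hp : p.IsPrime) (Q N : Submodule A M) : Submodule A M where
  carrier := {m | m ∈ Q ∧ ∃ s, s ∉ p ∧ s • m ∈ N}
  zero_mem' := ⟨Q.zero_mem, 1, (Ideal.ne_top_iff_one p).mp hp.ne_top,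
    by rw [smul_zero]; exact N.zero_mem⟩
  add_mem' := by
    rintro m m' ⟨hmQ, s, hs, hsm⟩ ⟨hm'Q, s', hs', hsm'⟩
    refine ⟨Q.add_mem hmQ hm'Q, s * s', fun h => ?_, ?_⟩
    · rcases hp.mem_or_mem h with h | h
      exacts [hs h, hs' h]
    · rw [smul_add]
      have h1 : (s * s') • m ∈ N := by rw [mul_comm, mul_smul]; exact N.smul_mem _ hsm
      have h2 : (s * s') • m' ∈ N := by rw [mul_smul]; exact N.smul_mem _ hsm'
      exact N.add_mem h1 h2
  smul_mem' := by
    rintro r m ⟨hmQ, s, hs, hsm⟩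
    exact ⟨Q.smul_mem r hmQ, s, hs, by rw [smul_comm]; exact N.smul_mem _ hsm⟩

lemma psat_invariant {p : Ideal A} (hp : p.IsPrime) {Q N : Submodule A M}
    (hQ : σ.Invariant Q) (hN : σ.Invariant N) : σ.Invariant (psat p hp Q N) := by
  rintro x m ⟨hmQ, s, hs, hsm⟩
  refine ⟨hQ x m hmQ, s * s, fun h => hs ((hp.mem_or_mem h).elim id id), ?_⟩
  have h1 : σ.ρ x (s • m) = L.anchor x s • m + s • σ.ρ x m := σ.ρ_leibniz x s m
  have h2 : (s * s) • σ.ρ x m = s • σ.ρ x (s • m) - L.anchor x s • (s • m) := by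
    rw [h1, smul_add, smul_comm s (L.anchor x s) m, smul_smul, smul_smul]
    abel
  rw [h2]
  exact Submodule.sub_mem _ (N.smul_mem s (hN x _ hsm)) (N.smul_mem _ hsm)

/-- Under (R2), every invariant submodule of `Q` is `p`-saturated in `Q`. -/
lemma layer_saturated {p : Ideal A} (hp : p.IsPrime)
    (R2 : ∀ q : Ideal A, L.InvariantIdeal q → q ≠ ⊤ → q ≤ p)
    {Q N : Submodule A M} (hQ : σ.Invariant Q) (hN : σ.Invariant N) (hNQ : N ≤ Q) :
    ∀ m ∈ Q, ∀ s ∉ p, s • m ∈ N → m ∈ N := by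
  classical
  set S := psat p hp Q N with hSdef
  have hSinv : σ.Invariant S := psat_invariant hp hQ hN
  by_cases hSN : S ≤ N
  · intro m hm s hs hsm
    exact hSN ⟨hm, s, hs, hsm⟩
  · exfalso
    obtain ⟨T, hT⟩ := IsNoetherian.noetherian S
    have hwit : ∀ y : M, y ∈ (T : Set M) → ∃ s, s ∉ p ∧ s • y ∈ N := by
      intro y hy
      have hyS : y ∈ S := hT ▸ Submodule.subset_span hy
      exact hyS.2
    choose! sw hsw1 hsw2 using hwit
    set s := ∏ y ∈ T, sw y with hs
    have hsnp : s ∉ p := by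
      rw [hs]
      refine Finset.prod_induction _ (· ∉ p)
        (fun a b ha hb h => (hp.mem_or_mem h).elim ha hb)
        ((Ideal.ne_top_iff_one p).mp hp.ne_top) (fun y hy => hsw1 y hy)
    have hcol : s ∈ N.colon S := by
      rw [Submodule.mem_colon]
      intro y hyS
      rw [← hT] at hyS
      induction hyS using Submodule.span_induction with
      | mem c hc =>
          have heq : s = (∏ y ∈ T.erase c, sw y) * sw c := by
            rw [hs, Finset.prod_erase_mul T _ hc]
          rw [heq, mul_smul]
          exact N.smul_mem _ (hsw2 c hc)
      | zero => rw [smul_zero]; exact N.zero_mem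
      | add y z hy hz hy' hz' => rw [smul_add]; exact N.add_mem hy' hz'
      | smul r y hy hy' => rw [smul_comm]; exact N.smul_mem _ hy'
    have hcolinv : L.InvariantIdeal (N.colon S) := invId_colon_mod hN hSinv
    have hcolt : N.colon S ≠ ⊤ := by
      intro h
      apply hSN
      intro y hy
      have h1 : (1 : A) ∈ N.colon S := by rw [h]; trivial
      have h2 := Submodule.mem_colon.mp h1 y hy
      rwa [one_smul] at h2
    exact hsnp (R2 _ hcolinv hcolt hcol)


/-- Chains of invariant submodules in a layer `p•Q ≤ N ≤ Q` are bounded. -/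
lemma layer_chainBd {p : Ideal A} (hp : p.IsPrime)
    (R2 : ∀ q : Ideal A, L.InvariantIdeal q → q ≠ ⊤ → q ≤ p)
    (Q : Submodule A M) (hQ : σ.Invariant Q) :
    ∃ B : ℕ, ChainBd (fun N : Submodule A M =>
      p • Q ≤ N ∧ N ≤ Q ∧ σ.Invariant N) B := by
  classical
  obtain ⟨r, u, hu⟩ := Submodule.fg_iff_exists_fin_generating_family.mp
    (IsNoetherian.noetherian Q)
  refine ⟨r, ?_⟩
  intro t c hc hP
  by_contra hcon
  push_neg at hcon
  have hx : ∀ i : Fin t, ∃ m, m ∈ c i.succ ∧ m ∉ c i.castSucc := by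
    intro i
    obtain ⟨m, hm1, hm2⟩ := SetLike.exists_of_lt (hc (Fin.castSucc_lt_succ (i := i)))
    exact ⟨m, hm1, hm2⟩
  choose xv hx1 hx2 using hx
  have huQ : ∀ j, u j ∈ Q := fun j => hu ▸ Submodule.subset_span ⟨j, rfl⟩
  have hco : ∀ i : Fin t, ∃ co : Fin r → A, ∑ j, co j • u j = xv i := by
    intro i
    have hxQ : xv i ∈ Q := (hP i.succ).2.1 (hx1 i)
    rw [← hu] at hxQ
    exact (Submodule.mem_span_range_iff_exists_fun A).mp hxQ
  choose co hco using hco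
  haveI : p.IsPrime := hp
  set w : Fin t → (Fin r → A ⧸ p) := fun i j => Ideal.Quotient.mk p (co i j) with hw
  have hnli : ¬ LinearIndependent (A ⧸ p) w := by
    intro hli
    have hcard := hli.fintype_card_le_finrank
    rw [Module.finrank_pi] at hcard
    simp only [Fintype.card_fin] at hcard
    omega
  rw [Fintype.not_linearIndependent_iff] at hnli
  obtain ⟨gg, hgg0, i0, hgi0⟩ := hnli
  have hlift : ∀ i, ∃ d : A, Ideal.Quotient.mk p d = gg i :=
    fun i => Ideal.Quotient.mk_surjective _
  choose dv hdv using hlift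
  have hcoef : ∀ j, (∑ i, dv i * co i j) ∈ p := by
    intro j
    rw [← Ideal.Quotient.eq_zero_iff_mem, map_sum]
    have := congrFun hgg0 j
    rw [Finset.sum_apply] at this
    calc ∑ i, Ideal.Quotient.mk p (dv i * co i j)
        = ∑ i, gg i * Ideal.Quotient.mk p (co i j) := by
          refine Finset.sum_congr rfl fun i _ => ?_
          rw [map_mul, hdv]
      _ = ∑ i, (gg i • w i) j := by
          refine Finset.sum_congr rfl fun i _ => ?_
          simp [hw, smul_eq_mul]
      _ = 0 := this
  have hv : (∑ i, dv i • xv i) ∈ p • Q := by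
    have hrw : (∑ i, dv i • xv i) = ∑ j, (∑ i, dv i * co i j) • u j := by
      calc (∑ i, dv i • xv i) = ∑ i, dv i • (∑ j, co i j • u j) := by
            refine Finset.sum_congr rfl fun i _ => ?_
            rw [hco i]
        _ = ∑ i, ∑ j, (dv i * co i j) • u j := by
            refine Finset.sum_congr rfl fun i _ => ?_
            rw [Finset.smul_sum]
            refine Finset.sum_congr rfl fun j _ => ?_
            rw [smul_smul]
        _ = ∑ j, ∑ i, (dv i * co i j) • u j := Finset.sum_comm
        _ = ∑ j, (∑ i, dv i * co i j) • u j := by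
            refine Finset.sum_congr rfl fun j _ => ?_
            rw [Finset.sum_smul]
    rw [hrw]
    exact Submodule.sum_mem _ fun j _ => Submodule.smul_mem_smul (hcoef j) (huQ j)
  set Sb : Finset (Fin t) := Finset.univ.filter (fun i => dv i ∉ p) with hSb
  have hSbne : Sb.Nonempty := by
    refine ⟨i0, ?_⟩
    rw [hSb, Finset.mem_filter]
    refine ⟨Finset.mem_univ _, fun h => hgi0 ?_⟩
    rw [← hdv i0, Ideal.Quotient.eq_zero_iff_mem]
    exact h
  set i₀ := Sb.max' hSbne with hi₀
  have hi₀p : dv i₀ ∉ p := (Finset.mem_filter.mp (Sb.max'_mem hSbne)).2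
  have hrest : ∀ i ∈ Finset.univ.erase i₀, dv i • xv i ∈ c i₀.castSucc := by
    intro i hi
    rcases lt_or_gt_of_ne (Finset.ne_of_mem_erase hi) with h | h
    · have hle : (c i.succ) ≤ c i₀.castSucc := hc.monotone (Fin.succ_le_castSucc_iff.mpr h)
      exact Submodule.smul_mem _ _ (hle (hx1 i))
    · have hdp : dv i ∈ p := by
        by_contra hnp
        have hiSb : i ∈ Sb := by
          rw [hSb, Finset.mem_filter]
          exact ⟨Finset.mem_univ _, hnp⟩
        exact absurd (Sb.le_max' i hiSb) (not_le.mpr h)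
      have hm : dv i • xv i ∈ p • Q :=
        Submodule.smul_mem_smul hdp ((hP i.succ).2.1 (hx1 i))
      exact (hP i₀.castSucc).1 hm
  have hmain : dv i₀ • xv i₀ ∈ c i₀.castSucc := by
    have hsplit : dv i₀ • xv i₀ =
        (∑ i, dv i • xv i) - ∑ i ∈ Finset.univ.erase i₀, dv i • xv i := by
      rw [eq_sub_iff_add_eq, add_comm, Finset.sum_erase_add _ _ (Finset.mem_univ i₀)]
    rw [hsplit]
    exact Submodule.sub_mem _ ((hP i₀.castSucc).1 hv) (Submodule.sum_mem _ hrest)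
  exact hx2 i₀ (layer_saturated hp R2 hQ (hP i₀.castSucc).2.2 (hP i₀.castSucc).2.1
    (xv i₀) ((hP i₀.succ).2.1 (hx1 i₀)) (dv i₀) hi₀p hmain)


/-- Main inductive bound: chains of invariant submodules above `p^e • ⊤` are bounded. -/
lemma main_bound {p : Ideal A} (hp : p.IsPrime) (hpinv : L.InvariantIdeal p)
    (R2 : ∀ q : Ideal A, L.InvariantIdeal q → q ≠ ⊤ → q ≤ p) :
    ∀ e : ℕ, ∃ B : ℕ, ChainBd (fun N : Submodule A M =>
      (p ^ e : Ideal A) • (⊤ : Submodule A M) ≤ N ∧ σ.Invariant N) B := by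
  intro e
  induction e with
  | zero =>
    refine ⟨0, ?_⟩
    intro t c hc hP
    by_contra h
    push_neg at h
    have hall : ∀ i, c i = ⊤ := by
      intro i
      have h1 := (hP i).1
      rw [pow_zero, Ideal.one_eq_top, Submodule.top_smul] at h1
      exact le_antisymm le_top h1
    have h01 : c ⟨0, by omega⟩ < c ⟨1, by omega⟩ := hc (by rw [Fin.mk_lt_mk]; omega)
    rw [hall, hall] at h01
    exact lt_irrefl _ h01
  | succ e ih =>
    obtain ⟨B₁, hB₁⟩ := ih
    have hQinv : σ.Invariant ((p ^ e : Ideal A) • (⊤ : Submodule A M)) :=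
      alg_inv_smul (invId_pow hpinv e) alg_inv_top
    obtain ⟨B₂, hB₂⟩ := layer_chainBd hp R2 ((p ^ e : Ideal A) • (⊤ : Submodule A M)) hQinv
    refine ⟨B₁ + B₂, ?_⟩
    refine ChainBd.split ((p ^ e : Ideal A) • (⊤ : Submodule A M)) hB₁ hB₂ ?_ ?_
    · intro N hN
      exact ⟨le_sup_right, alg_inv_sup hN.2 hQinv⟩
    · intro N hN
      refine ⟨?_, inf_le_right, alg_inv_inf hN.2 hQinv⟩
      rw [← smul_top_succ]
      refine le_inf hN.1 ?_
      rw [smul_top_succ]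
      exact Submodule.smul_le_right

/-- Powers of the colon ideal push into powers of `I`. -/
lemma colon_pow_le {I : Ideal A} :
    ∀ s : ℕ, (((I • (⊤ : Submodule A M)).colon ⊤) ^ s : Ideal A) • (⊤ : Submodule A M) ≤
      (I ^ s : Ideal A) • (⊤ : Submodule A M) := by
  set J := (I • (⊤ : Submodule A M)).colon ⊤ with hJ
  intro s
  induction s with
  | zero => simp
  | succ s ih =>
    rw [smul_top_succ, smul_top_succ]
    refine le_trans (Submodule.smul_mono le_rfl ih) ?_
    have hq : (I ^ s : Ideal A) • ((I : Ideal A) • (⊤ : Submodule A M)) =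
        (I : Ideal A) • ((I ^ s : Ideal A) • (⊤ : Submodule A M)) := by
      rw [← Submodule.smul_assoc, ← Submodule.smul_assoc, Ideal.smul_eq_mul, Ideal.smul_eq_mul,
        mul_comm]
    rw [Submodule.smul_le]
    intro a ha y hy
    refine Submodule.smul_induction_on hy ?_ ?_
    · intro b hb m hm
      have h1 : a • m ∈ (I : Ideal A) • (⊤ : Submodule A M) := by
        have := Submodule.mem_colon.mp ha m trivial
        exact this
      have h2 : a • b • m = b • (a • m) := by
        rw [smul_smul, smul_smul, mul_comm]
      rw [h2, ← hq]
      exact Submodule.smul_mem_smul hb h1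
    · intro y₁ y₂ h1 h2
      rw [smul_add]
      exact Submodule.add_mem _ h1 h2


end AuxAlgebra
/-- Let `g_A` be a Lie algebroid over a local noetherian `k`-algebra `A` and
`M` a `g_A`-module of finite type over `A`.  (1) If `I` is a defining ideal for the
`g_A`-module `A`, then `I` is a defining ideal for `M`.  (2) If `I` is a defining ideal for
`M`, then `ℓ_{g_A}(M/I^{n+1}M) < ∞` for every `n ≥ 0`. -/
theorem definingIdeal_props
    (k : Type u) (A : Type v) (g : Type w) [Field k] [CharZero k] [IsAlgClosed k]
    [CommRing A] [IsLocalRing A] [IsNoetherianRing A] [Algebra k A]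
    (hcoef : Function.Bijective (algebraMap k (ResidueField A)))
    [LieRing g] [LieAlgebra k g] [Module A g] [IsScalarTower k A g] [Module.Finite A g]
    (L : LieAlgebroid k A g)
    (M : Type v) [AddCommGroup M] [Module A M] [Module.Finite A M]
    (σ : AlgebroidModule L M) (I : Ideal A) :
    (L.IsDefiningIdeal I → σ.IsDefiningIdeal I) ∧
    (σ.IsDefiningIdeal I → ∀ n : ℕ,
      Order.krullDim {N : Submodule A M //
        I ^ (n + 1) • (⊤ : Submodule A M) ≤ N ∧ σ.Invariant N} < ⊤) := by
  constructor
  · rintro ⟨hItop, hIinv, hkr⟩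
    refine ⟨hItop, hIinv, ?_⟩
    obtain ⟨B, hB⟩ := chainBd_of_krullDim_lt_top hkr
    have R2 : ∀ q : Ideal A, L.InvariantIdeal q → q ≠ ⊤ → q ≤ I.radical :=
      fun q hq hqt => mega_ideal hIinv hB q hq hqt
    have hpinv : L.InvariantIdeal I.radical := invId_radical hIinv
    have hpt : I.radical ≠ ⊤ := fun h => hItop (Ideal.radical_eq_top.mp h)
    have hp : I.radical.IsPrime := prime_of_invariant_max (Ideal.radical_idem I) hpinv hpt R2
    obtain ⟨cc, hcc⟩ := Ideal.exists_radical_pow_le_of_fg I (IsNoetherian.noetherian _)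
    obtain ⟨B', hB'⟩ := main_bound (σ := σ) hp hpinv R2 cc
    refine krullDim_lt_top_of_chainBd (hB'.mono ?_)
    intro N hN
    exact ⟨le_trans (Submodule.smul_mono hcc le_rfl) hN.1, hN.2⟩
  · rintro ⟨hItop, hIinv, hkr⟩ n
    obtain ⟨B, hB⟩ := chainBd_of_krullDim_lt_top hkr
    by_cases htriv : (⊤ : Submodule A M) = ⊥
    · refine krullDim_lt_top_of_chainBd (B := 0) ?_
      intro t c hc hP
      by_contra h
      push_neg at h
      have h01 : c ⟨0, by omega⟩ < c ⟨1, by omega⟩ := hc (by rw [Fin.mk_lt_mk]; omega)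
      have hall : ∀ N : Submodule A M, N = ⊤ := fun N =>
        le_antisymm le_top (by rw [htriv]; exact bot_le)
      rw [hall (c ⟨0, by omega⟩), hall (c ⟨1, by omega⟩)] at h01
      exact lt_irrefl _ h01
    · set J := (I • (⊤ : Submodule A M)).colon ⊤ with hJdef
      have hJinv : L.InvariantIdeal J :=
        invId_colon_mod (σ := σ) (alg_inv_smul hIinv alg_inv_top) alg_inv_top
      have hJt : J ≠ ⊤ := by
        intro h
        have h1 : (⊤ : Submodule A M) ≤ I • ⊤ := by
          intro m _
          have h2 : (1 : A) ∈ J := by rw [h]; trivial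
          have h3 := Submodule.mem_colon.mp h2 m trivial
          rwa [one_smul] at h3
        have hjac : I ≤ (⊥ : Ideal A).jacobson := by
          rw [IsLocalRing.jacobson_eq_maximalIdeal (⊥ : Ideal A) bot_ne_top]
          exact IsLocalRing.le_maximalIdeal hItop
        exact htriv (Submodule.eq_bot_of_le_smul_of_le_jacobson_bot I ⊤
          (IsNoetherian.noetherian _) h1 hjac)
      have R2 : ∀ q : Ideal A, L.InvariantIdeal q → q ≠ ⊤ → q ≤ J.radical :=
        fun q hq hqt => mega_module hIinv hB q hq hqt
      have hpinv : L.InvariantIdeal J.radical := invId_radical hJinv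
      have hp : J.radical.IsPrime := prime_of_invariant_max (Ideal.radical_idem J) hpinv
        (fun h => hJt (Ideal.radical_eq_top.mp h)) R2
      obtain ⟨cc, hcc⟩ := Ideal.exists_radical_pow_le_of_fg J (IsNoetherian.noetherian _)
      obtain ⟨B', hB'⟩ := main_bound (σ := σ) hp hpinv R2 (cc * (n + 1))
      refine krullDim_lt_top_of_chainBd (hB'.mono ?_)
      intro N hN
      refine ⟨?_, hN.2⟩
      refine le_trans ?_ hN.1
      have h1 : (J.radical ^ (cc * (n + 1)) : Ideal A) ≤ (J ^ (n + 1) : Ideal A) := by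
        rw [pow_mul]
        exact pow_le_pow_left' hcc (n + 1)
      refine le_trans (Submodule.smul_mono h1 le_rfl) ?_
      exact colon_pow_le (n + 1)
end
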